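/- arXiv:2404.11704 — 6 statements merged into one kernel-verified Lean document; each statement's English description precedes it below -/
import Mathlib

section
/- Let H be a fixed graph, let G be a minimal obstruction to H-coloring, and let U and W be two non-empty disjoint subsets of V(G). Let J be the graph on V(G)\U whose edges are the pairs uv such that every H-coloring c of G−U satisfies c(u)c(v) ∈ E(H). If there exists a homomorphism φ from G[U] to J[W], then there exists a vertex u ∈ U with N_G(u)\U not contained in N_J(φ(u)). -/
open SimpleGraph

/-- `G` is a minimal obstruction to `H`-coloring: `G` has no homomorphism to `H`, but every
proper induced subgraph of `G` has one. -/
def MinObstruction {V W : Type*} (G : SimpleGraph V) (H : SimpleGraph W) : Prop :=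
  ¬ Nonempty (G →g H) ∧ ∀ s : Set V, s ≠ Set.univ → Nonempty (G.induce s →g H)

/-- `c : V → W` is an `H`-coloring of the graph `G - U` (encoded as a total function: only the
values outside `U` matter). -/
def ColoringOff {V W : Type*} (G : SimpleGraph V) (H : SimpleGraph W) (U : Set V)
    (c : V → W) : Prop :=
  ∀ ⦃u v : V⦄, G.Adj u v → u ∉ U → v ∉ U → H.Adj (c u) (c v)

/-- The graph `J = hull(G - U, H)`: vertices outside `U` are adjacent iff every `H`-coloring of
`G - U` maps them to adjacent vertices of `H`. -/
def hullOff {V W : Type*} (G : SimpleGraph V) (H : SimpleGraph W) (U : Set V) :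
    SimpleGraph V :=
  SimpleGraph.fromRel (fun u v =>
    u ∉ U ∧ v ∉ U ∧ ∀ c : V → W, ColoringOff G H U c → H.Adj (c u) (c v))

lemma hullOff_adj_apply {V W : Type*} {G : SimpleGraph V} {H : SimpleGraph W} {U : Set V}
    {x y : V} (h : (hullOff G H U).Adj x y) {c : V → W} (hc : ColoringOff G H U c) :
    H.Adj (c x) (c y) := by
  rw [hullOff, SimpleGraph.fromRel_adj] at h
  rcases h.2 with ⟨_, _, h'⟩ | ⟨_, _, h'⟩
  · exact h' c hc
  · exact (h' c hc).symm

/-- If `G` is a minimal obstruction to `H`-coloring, `U, W` are nonempty disjoint vertex sets,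
`J = hull(G - U, H)`, and `φ` is a homomorphism from `G[U]` to `J[W]`, then some `u ∈ U`
satisfies `N_G(u) \ U ⊄ N_J(φ(u))`. -/
theorem stmt3 {V W' : Type*} (G : SimpleGraph V) (H : SimpleGraph W')
    (hmin : MinObstruction G H) (U Ws : Set V) (hU : U.Nonempty) (hW : Ws.Nonempty)
    (hdisj : Disjoint U Ws) (φ : V → V) (hmap : Set.MapsTo φ U Ws)
    (hhom : ∀ ⦃u v : V⦄, u ∈ U → v ∈ U → G.Adj u v → (hullOff G H U).Adj (φ u) (φ v)) :
    ∃ u ∈ U, ¬ ({v | G.Adj u v} \ U ⊆ {v | (hullOff G H U).Adj (φ u) v}) := by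
  classical
  by_contra hcon
  push_neg at hcon
  have hne : (Uᶜ : Set V) ≠ Set.univ := by
    intro h
    obtain ⟨u, hu⟩ := hU
    have : u ∈ (Uᶜ : Set V) := h ▸ Set.mem_univ u
    exact this hu
  obtain ⟨g⟩ := hmin.2 Uᶜ hne
  obtain ⟨w, hw⟩ := hW
  have hwU : w ∉ U := fun h => (hdisj (Set.singleton_subset_iff.2 h)
    (Set.singleton_subset_iff.2 hw)) rfl
  set c : V → W' := fun v => if h : v ∉ U then g ⟨v, h⟩ else g ⟨w, hwU⟩ with hc_def
  have hc : ColoringOff G H U c := by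
    intro u v hadj hu hv
    simp only [hc_def, dif_pos hu, dif_pos hv]
    exact g.map_adj hadj
  have hφW : ∀ u ∈ U, φ u ∉ U := fun u hu h =>
    (hdisj (Set.singleton_subset_iff.2 h) (Set.singleton_subset_iff.2 (hmap hu))) rfl
  set f : V → W' := fun v => c (if v ∈ U then φ v else v) with hf_def
  have hf : ∀ ⦃a b : V⦄, G.Adj a b → H.Adj (f a) (f b) := by
    intro a b hab
    simp only [hf_def]
    by_cases ha : a ∈ U <;> by_cases hb : b ∈ U
    · simp only [if_pos ha, if_pos hb]
      exact hullOff_adj_apply (hhom ha hb hab) hc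
    · simp only [if_pos ha, if_neg hb]
      have : b ∈ {v | G.Adj a v} \ U := ⟨hab, hb⟩
      exact hullOff_adj_apply (hcon a ha this) hc
    · simp only [if_neg ha, if_pos hb]
      have : a ∈ {v | G.Adj b v} \ U := ⟨hab.symm, ha⟩
      exact (hullOff_adj_apply (hcon b hb this) hc).symm
    · simp only [if_neg ha, if_neg hb]
      exact hc hab ha hb
  exact hmin.1 ⟨⟨f, fun {a b} h => hf h⟩⟩
end

section
/- Let F ∈ {S_{2,2,1}, S_{3,1,1}} and let G be a connected graph that is F-free, C_5-free and K_3-free, containing an induced odd cycle C of minimal odd length t ≥ 7 with consecutive vertices c_0,...,c_{t-1}. Then every vertex of G not on C has exactly two neighbors on C, and these are of the form c_{i-1}, c_{i+1} for some i (indices mod t). -/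
open SimpleGraph

/-- `G` contains no induced subgraph isomorphic to `F`. -/
def IsFreeOf {V VF : Type*} (G : SimpleGraph V) (F : SimpleGraph VF) : Prop :=
  ∀ s : Set V, ¬ Nonempty (F ≃g G.induce s)

/-- The subdivided claw `S_{2,2,1}`: legs `0-1-2`, `0-3-4`, `0-5` from the center `0`. -/
def S221 : SimpleGraph (Fin 6) :=
  SimpleGraph.fromEdgeSet {s(0,1), s(1,2), s(0,3), s(3,4), s(0,5)}

/-- The subdivided claw `S_{3,1,1}`: legs `0-1-2-3`, `0-4`, `0-5` from the center `0`. -/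
def S311 : SimpleGraph (Fin 6) :=
  SimpleGraph.fromEdgeSet {s(0,1), s(1,2), s(2,3), s(0,4), s(0,5)}

lemma notFree {V : Type*} (G : SimpleGraph V) (F : SimpleGraph (Fin 6)) (f : Fin 6 → V)
    (hf : Function.Injective f) (h : ∀ a b, F.Adj a b ↔ G.Adj (f a) (f b)) :
    ¬ IsFreeOf G F := by
  intro hfree
  refine hfree (Set.range f) ⟨⟨Equiv.ofInjective f hf, ?_⟩⟩
  intro a b
  simp [comap_adj, Equiv.ofInjective, h a b]

lemma noS221 {V : Type*} {G : SimpleGraph V} (hfree : IsFreeOf G S221)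
    (v0 v1 v2 v3 v4 v5 : V)
    (e01 : G.Adj v0 v1) (e12 : G.Adj v1 v2) (e03 : G.Adj v0 v3) (e34 : G.Adj v3 v4)
    (e05 : G.Adj v0 v5)
    (n02 : ¬G.Adj v0 v2) (n04 : ¬G.Adj v0 v4) (n13 : ¬G.Adj v1 v3) (n14 : ¬G.Adj v1 v4)
    (n15 : ¬G.Adj v1 v5) (n23 : ¬G.Adj v2 v3) (n24 : ¬G.Adj v2 v4) (n25 : ¬G.Adj v2 v5)
    (n35 : ¬G.Adj v3 v5) (n45 : ¬G.Adj v4 v5)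
    (d02 : v0 ≠ v2) (d04 : v0 ≠ v4) (d13 : v1 ≠ v3) (d14 : v1 ≠ v4) (d15 : v1 ≠ v5)
    (d23 : v2 ≠ v3) (d24 : v2 ≠ v4) (d25 : v2 ≠ v5) (d35 : v3 ≠ v5) (d45 : v4 ≠ v5) :
    False := by
  have d01 := e01.ne
  have d12 := e12.ne
  have d03 := e03.ne
  have d34 := e34.ne
  have d05 := e05.ne
  apply notFree G S221 ![v0, v1, v2, v3, v4, v5] _ _ hfree
  · intro a b hab
    fin_cases a <;> fin_cases b <;>
      simp only [Matrix.cons_val_zero, Matrix.cons_val_one, Matrix.head_cons,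
        Matrix.cons_val_succ] at hab ⊢ <;>
      first
        | rfl
        | exact absurd hab (by assumption)
        | exact absurd hab.symm (by assumption)
  · intro a b
    fin_cases a <;> fin_cases b <;>
      simp only [Matrix.cons_val_zero, Matrix.cons_val_one, Matrix.head_cons,
        Matrix.cons_val_succ] <;>
      simp [S221, Set.mem_insert_iff] <;>
      first
        | assumption
        | exact e01.symm
        | exact e12.symm
        | exact e03.symm
        | exact e34.symm
        | exact e05.symm
        | exact fun h => n02 h.symm
        | exact fun h => n04 h.symm
        | exact fun h => n13 h.symm
        | exact fun h => n14 h.symm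
        | exact fun h => n15 h.symm
        | exact fun h => n23 h.symm
        | exact fun h => n24 h.symm
        | exact fun h => n25 h.symm
        | exact fun h => n35 h.symm
        | exact fun h => n45 h.symm

lemma noS311 {V : Type*} {G : SimpleGraph V} (hfree : IsFreeOf G S311)
    (v0 v1 v2 v3 v4 v5 : V)
    (e01 : G.Adj v0 v1) (e12 : G.Adj v1 v2) (e23 : G.Adj v2 v3) (e04 : G.Adj v0 v4)
    (e05 : G.Adj v0 v5)
    (n02 : ¬G.Adj v0 v2) (n03 : ¬G.Adj v0 v3) (n13 : ¬G.Adj v1 v3) (n14 : ¬G.Adj v1 v4)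
    (n15 : ¬G.Adj v1 v5) (n24 : ¬G.Adj v2 v4) (n25 : ¬G.Adj v2 v5) (n34 : ¬G.Adj v3 v4)
    (n35 : ¬G.Adj v3 v5) (n45 : ¬G.Adj v4 v5)
    (d02 : v0 ≠ v2) (d03 : v0 ≠ v3) (d13 : v1 ≠ v3) (d14 : v1 ≠ v4) (d15 : v1 ≠ v5)
    (d24 : v2 ≠ v4) (d25 : v2 ≠ v5) (d34 : v3 ≠ v4) (d35 : v3 ≠ v5) (d45 : v4 ≠ v5) :
    False := by
  have d01 := e01.ne
  have d12 := e12.ne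
  have d23 := e23.ne
  have d04 := e04.ne
  have d05 := e05.ne
  apply notFree G S311 ![v0, v1, v2, v3, v4, v5] _ _ hfree
  · intro a b hab
    fin_cases a <;> fin_cases b <;>
      simp only [Matrix.cons_val_zero, Matrix.cons_val_one, Matrix.head_cons,
        Matrix.cons_val_succ] at hab ⊢ <;>
      first
        | rfl
        | exact absurd hab (by assumption)
        | exact absurd hab.symm (by assumption)
  · intro a b
    fin_cases a <;> fin_cases b <;>
      simp only [Matrix.cons_val_zero, Matrix.cons_val_one, Matrix.head_cons,
        Matrix.cons_val_succ] <;>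
      simp [S311, Set.mem_insert_iff] <;>
      first
        | assumption
        | exact e01.symm
        | exact e12.symm
        | exact e23.symm
        | exact e04.symm
        | exact e05.symm
        | exact fun h => n02 h.symm
        | exact fun h => n03 h.symm
        | exact fun h => n13 h.symm
        | exact fun h => n14 h.symm
        | exact fun h => n15 h.symm
        | exact fun h => n24 h.symm
        | exact fun h => n25 h.symm
        | exact fun h => n34 h.symm
        | exact fun h => n35 h.symm
        | exact fun h => n45 h.symm

def cWalk {V : Type*} {G : SimpleGraph V} {t : ℕ} {c : ZMod t → V}
    (hadj : ∀ i : ZMod t, G.Adj (c i) (c (i+1))) :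
    ∀ (i : ZMod t) (d : ℕ), G.Walk (c i) (c (i + (d : ZMod t)))
  | i, 0 => Walk.nil.copy rfl (by norm_num)
  | i, (d+1) => (Walk.cons (hadj i) (cWalk hadj (i+1) d)).copy rfl
      (by congr 1; push_cast; ring)

lemma cWalk_length {V : Type*} {G : SimpleGraph V} {t : ℕ} {c : ZMod t → V}
    (hadj : ∀ i : ZMod t, G.Adj (c i) (c (i+1))) (i : ZMod t) (d : ℕ) :
    (cWalk hadj i d).length = d := by
  induction d generalizing i with
  | zero => simp [cWalk]
  | succ d ih => simp [cWalk, ih]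

lemma cWalk_support {V : Type*} {G : SimpleGraph V} {t : ℕ} {c : ZMod t → V}
    (hadj : ∀ i : ZMod t, G.Adj (c i) (c (i+1))) (i : ZMod t) (d : ℕ) :
    (cWalk hadj i d).support = (List.range (d+1)).map (fun k : ℕ => c (i + (k : ZMod t))) := by
  induction d generalizing i with
  | zero =>
      have h0 : (cWalk hadj i 0).support = [c i] := by simp [cWalk]
      simp [h0, List.range_succ]
  | succ d ih =>
      have h0 : (cWalk hadj i (d+1)).support = c i :: (cWalk hadj (i+1) d).support := by
        simp [cWalk]
      have h1 : List.range (d+1+1) = 0 :: (List.range (d+1)).map Nat.succ :=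
        List.range_succ_eq_map
      rw [h0, ih, h1, List.map_cons, List.map_map]
      congr 1
      · norm_num
      · refine List.map_congr_left fun k _ => ?_
        show c (i + 1 + (k : ZMod t)) = c (i + ((k+1 : ℕ) : ZMod t))
        congr 1; push_cast; ring

lemma cycle_bound {V : Type*} {G : SimpleGraph V} {t : ℕ} {c : ZMod t → V} [NeZero t]
    (hinj : Function.Injective c)
    (hadj : ∀ i : ZMod t, G.Adj (c i) (c (i+1)))
    (hmin : ∀ (u : V) (w : G.Walk u u), w.IsCycle → Odd w.length → t ≤ w.length)
    (v : V) (hv : v ∉ Set.range c) (j : ZMod t) (d : ℕ) (hd0 : 0 < d) (hdt : d < t)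
    (hodd : Odd d) (h1 : G.Adj v (c j)) (h2 : G.Adj v (c (j + (d : ZMod t)))) :
    t ≤ d + 2 := by
  have hsupp := cWalk_support hadj j d
  set P : G.Walk v (c (j + (d:ZMod t))) := Walk.cons h1 (cWalk hadj j d) with hP
  have hnotmem : v ∉ (cWalk hadj j d).support := by
    rw [hsupp]
    intro hvmem
    obtain ⟨k, _, hk⟩ := List.mem_map.mp hvmem
    exact hv ⟨_, hk⟩
  have hPpath : P.IsPath := by
    rw [Walk.isPath_def, hP, Walk.support_cons, List.nodup_cons]
    refine ⟨hnotmem, ?_⟩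
    rw [hsupp]
    refine List.Nodup.map_on ?_ List.nodup_range
    intro x hx y hy hxy
    rw [List.mem_range] at hx hy
    have h' : (x : ZMod t) = (y : ZMod t) := by
      have := hinj hxy
      exact add_left_cancel this
    have := congrArg ZMod.val h'
    rwa [ZMod.val_cast_of_lt (by omega), ZMod.val_cast_of_lt (by omega)] at this
  have hedge : s(c (j + (d:ZMod t)), v) ∉ P.edges := by
    rw [hP, Walk.edges_cons]
    intro hmem
    rcases List.mem_cons.mp hmem with h | h
    · rcases Sym2.eq_iff.mp h with ⟨h1', _⟩ | ⟨h1', h2'⟩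
      · exact hv ⟨_, h1'⟩
      · have hd : (d : ZMod t) = 0 := by
          have := hinj h1'
          have h3 : j + (d : ZMod t) = j + 0 := by rw [add_zero]; exact this
          exact add_left_cancel h3
        have := congrArg ZMod.val hd
        rw [ZMod.val_cast_of_lt hdt, ZMod.val_zero] at this
        omega
    · have hvs := Walk.snd_mem_support_of_mem_edges _ h
      exact hnotmem hvs
  have hcy : (Walk.cons h2.symm P).IsCycle :=
    (Walk.cons_isCycle_iff P h2.symm).mpr ⟨hPpath, hedge⟩
  have hlen : (Walk.cons h2.symm P).length = d + 2 := by
    rw [Walk.length_cons, hP, Walk.length_cons, cWalk_length]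
  have hml := hmin _ _ hcy (by rw [hlen]; obtain ⟨k, hk⟩ := hodd; exact ⟨k+1, by omega⟩)
  omega

/-- Let `F ∈ {S_{2,2,1}, S_{3,1,1}}` and let `G` be a connected `{F, C₅, K₃}`-free graph with
an induced odd cycle `c` of minimal odd length `t ≥ 7`. Then every vertex not on the cycle has
exactly two neighbors on it, of the form `c_{i-1}`, `c_{i+1}` for some `i`. -/
theorem stmt8 {V : Type*} (G : SimpleGraph V) (F : SimpleGraph (Fin 6))
    (hF : F = S221 ∨ F = S311)
    (hconn : G.Connected) (hFfree : IsFreeOf G F)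
    (hC5free : IsFreeOf G (cycleGraph 5)) (hK3 : G.CliqueFree 3)
    (t : ℕ) (ht7 : 7 ≤ t) (htodd : Odd t)
    (c : ZMod t → V) (hinj : Function.Injective c)
    (hcyc : ∀ i j : ZMod t, G.Adj (c i) (c j) ↔ (j = i + 1 ∨ i = j + 1))
    (hmin : ∀ (u : V) (w : G.Walk u u), w.IsCycle → Odd w.length → t ≤ w.length) :
    ∀ v : V, v ∉ Set.range c →
      ∃ i : ZMod t, ∀ j : ZMod t, G.Adj v (c j) ↔ (j = i - 1 ∨ j = i + 1) := by
  haveI : NeZero t := ⟨by omega⟩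
  have hc1 : ∀ i : ZMod t, G.Adj (c i) (c (i+1)) := fun i => (hcyc i (i+1)).2 (Or.inl rfl)
  have hne : ∀ a b : ℕ, a < t → b < t → a ≠ b → (a : ZMod t) ≠ (b : ZMod t) := by
    intro a b ha hb hab h
    have := congrArg ZMod.val h
    rw [ZMod.val_cast_of_lt ha, ZMod.val_cast_of_lt hb] at this
    exact hab this
  have hcne : ∀ (i : ZMod t) (a b : ℕ), a < t → b < t → a ≠ b →
      c (i + (a : ZMod t)) ≠ c (i + (b : ZMod t)) :=
    fun i a b ha hb hab h => hne a b ha hb hab (add_left_cancel (hinj h))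
  have hadjc : ∀ (i : ZMod t) (a : ℕ), G.Adj (c (i + (a : ZMod t))) (c (i + ((a+1 : ℕ) : ZMod t))) := by
    intro i a
    have h := hc1 (i + (a : ZMod t))
    have e : i + (a:ZMod t) + 1 = i + ((a+1 : ℕ) : ZMod t) := by push_cast; ring
    rwa [e] at h
  have hnadj : ∀ (i : ZMod t) (a b : ℕ), a < b → b < t → b ≠ a + 1 → ¬(a = 0 ∧ b = t-1) →
      ¬ G.Adj (c (i + (a : ZMod t))) (c (i + (b : ZMod t))) := by
    intro i a b hab hbt hb1 hwrap hadj
    rw [hcyc] at hadj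
    rcases hadj with h | h
    · have h' : (b : ZMod t) = ((a+1:ℕ) : ZMod t) := by
        have h2 : i + (b:ZMod t) = i + (((a+1:ℕ)):ZMod t) := by rw [h]; push_cast; ring
        exact add_left_cancel h2
      exact hne b (a+1) hbt (by omega) (by omega) h'
    · have h' : (a : ZMod t) = ((b+1:ℕ) : ZMod t) := by
        have h2 : i + (a:ZMod t) = i + (((b+1:ℕ)):ZMod t) := by rw [h]; push_cast; ring
        exact add_left_cancel h2
      by_cases hb : b + 1 = t
      · have h0 : ((b+1:ℕ) : ZMod t) = ((0:ℕ) : ZMod t) := by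
          rw [hb]; simp [ZMod.natCast_self]
        have ha0 : a = 0 := by
          have := congrArg ZMod.val (h'.trans h0)
          rwa [ZMod.val_cast_of_lt (by omega), ZMod.val_cast_of_lt (by omega)] at this
        exact hwrap ⟨ha0, by omega⟩
      · exact hne a (b+1) (by omega) (by omega) (by omega) h'
  -- Claim A: any two neighbours on the cycle are at distance 2
  have claimA : ∀ v : V, v ∉ Set.range c → ∀ j k : ZMod t, G.Adj v (c j) → G.Adj v (c k) →
      j ≠ k → k = j + ((2:ℕ) : ZMod t) ∨ j = k + ((2:ℕ) : ZMod t) := by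
    intro v hv j k h1 h2 hjk
    set d := (k - j).val with hd
    have hkd : k = j + (d : ZMod t) := by rw [hd, ZMod.natCast_zmod_val]; ring
    have hdt : d < t := ZMod.val_lt _
    have hd0 : d ≠ 0 := by
      intro h0
      apply hjk
      have : k - j = 0 := (ZMod.val_eq_zero _).mp h0
      have := sub_eq_zero.mp this
      exact this.symm
    rcases Nat.even_or_odd d with hev | hod
    · have hd' : j = k + ((t - d : ℕ) : ZMod t) := by
        rw [hkd]
        rw [Nat.cast_sub (le_of_lt hdt), ZMod.natCast_self]
        ring
      have hodd' : Odd (t - d) := by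
        obtain ⟨a, ha⟩ := htodd
        obtain ⟨b, hb⟩ := hev
        exact ⟨a - b, by omega⟩
      have hb := cycle_bound hinj hc1 hmin v hv k (t-d) (by omega) (by omega) hodd' h2
        (by rw [← hd']; exact h1)
      have hd2 : d = 2 := by obtain ⟨b, hb2⟩ := hev; omega
      left; rw [hkd, hd2]
    · have hb := cycle_bound hinj hc1 hmin v hv j d (by omega) hdt hod h1
        (by rw [← hkd]; exact h2)
      have hd2 : d = t - 2 := by
        obtain ⟨a, ha⟩ := htodd
        obtain ⟨b, hb2⟩ := hod
        omega
      right
      rw [hkd, hd2, add_assoc]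
      have h6 : ((t-2 : ℕ) : ZMod t) + ((2:ℕ) : ZMod t) = 0 := by
        rw [← Nat.cast_add]
        have : t - 2 + 2 = t := by omega
        rw [this, ZMod.natCast_self]
      rw [h6, add_zero]
  -- Claim A2: a vertex off the cycle with a neighbour on the cycle has the desired pattern
  have claimA2 : ∀ v : V, v ∉ Set.range c → ∀ m : ZMod t, G.Adj v (c m) →
      ∃ i : ZMod t, ∀ l : ZMod t, G.Adj v (c l) ↔ (l = i - 1 ∨ l = i + 1) := by
    intro v hv m hm
    by_cases hsingle : ∃ n, n ≠ m ∧ G.Adj v (c n)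
    · obtain ⟨n, hnm, hn⟩ := hsingle
      obtain ⟨j, hj1, hj2⟩ : ∃ j : ZMod t, G.Adj v (c j) ∧ G.Adj v (c (j + ((2:ℕ) : ZMod t))) := by
        rcases claimA v hv m n hm hn (Ne.symm hnm) with h | h
        · exact ⟨m, hm, by rw [← h]; exact hn⟩
        · exact ⟨n, hn, by rw [← h]; exact hm⟩
      refine ⟨j + 1, fun l => ?_⟩
      have hj2' : j + ((2:ℕ) : ZMod t) = j + 1 + 1 := by push_cast; ring
      constructor
      · intro hl
        by_cases hlj : l = j
        · left; rw [hlj]; ring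
        by_cases hlj2 : l = j + ((2:ℕ) : ZMod t)
        · right; rw [hlj2, hj2']
        exfalso
        have HA := claimA v hv j l hj1 hl (fun h => hlj h.symm)
        have HB := claimA v hv (j + ((2:ℕ) : ZMod t)) l hj2 hl (fun h => hlj2 h.symm)
        rcases HA with h1 | h1
        · exact hlj2 h1
        · rcases HB with h2 | h2
          · have h3 : j = j + (((2:ℕ) : ZMod t) + ((2:ℕ) : ZMod t) + ((2:ℕ) : ZMod t)) := by
              conv_lhs => rw [h1, h2]
              ring
            have h4 : ((6:ℕ) : ZMod t) = ((0:ℕ) : ZMod t) := by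
              have h5 := (left_eq_add.mp h3)
              have : ((2:ℕ) : ZMod t) + ((2:ℕ) : ZMod t) + ((2:ℕ) : ZMod t) = ((6:ℕ) : ZMod t) := by
                push_cast; ring
              rw [this] at h5
              rw [h5]; norm_num
            exact hne 6 0 (by omega) (by omega) (by omega) h4
          · exact hlj (add_right_cancel h2).symm
      · intro hl
        rcases hl with h | h
        · have : l = j := by rw [h]; ring
          rw [this]; exact hj1
        · have : l = j + ((2:ℕ) : ZMod t) := by rw [h, hj2']
          rw [this]; exact hj2
    · push_neg at hsingle
      have honly : ∀ n : ZMod t, G.Adj v (c n) → n = m := by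
        intro n hn
        by_contra hc
        exact hsingle n hc hn
      exfalso
      have hvne : ∀ a : ZMod t, c a ≠ v := fun a h => hv ⟨a, h⟩
      rcases hF with rfl | rfl
      · -- S221: center c m = c (i + 2)
        set i := m - ((2:ℕ) : ZMod t) with hi
        have hm2 : m = i + ((2:ℕ) : ZMod t) := by rw [hi]; ring
        have hvn : ∀ a : ℕ, a < t → a ≠ 2 → ¬ G.Adj v (c (i + (a : ZMod t))) := by
          intro a ha ha2 hadj
          have := honly _ hadj
          rw [hm2] at this
          exact hne a 2 ha (by omega) ha2 (add_left_cancel this)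
        refine noS221 hFfree (c (i + ((2:ℕ):ZMod t))) (c (i + ((3:ℕ):ZMod t)))
          (c (i + ((4:ℕ):ZMod t))) (c (i + ((1:ℕ):ZMod t))) (c (i + ((0:ℕ):ZMod t))) v
          (hadjc i 2) (hadjc i 3) (hadjc i 1).symm (hadjc i 0).symm (by rw [← hm2]; exact hm.symm)
          (hnadj i 2 4 (by omega) (by omega) (by omega) (by omega))
          (fun h => hnadj i 0 2 (by omega) (by omega) (by omega) (by omega) h.symm)
          (fun h => hnadj i 1 3 (by omega) (by omega) (by omega) (by omega) h.symm)
          (fun h => hnadj i 0 3 (by omega) (by omega) (by omega) (by omega) h.symm)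
          (fun h => hvn 3 (by omega) (by omega) h.symm)
          (fun h => hnadj i 1 4 (by omega) (by omega) (by omega) (by omega) h.symm)
          (fun h => hnadj i 0 4 (by omega) (by omega) (by omega) (by omega) h.symm)
          (fun h => hvn 4 (by omega) (by omega) h.symm)
          (fun h => hvn 1 (by omega) (by omega) h.symm)
          (fun h => hvn 0 (by omega) (by omega) h.symm)
          (hcne i 2 4 (by omega) (by omega) (by omega))
          (hcne i 2 0 (by omega) (by omega) (by omega))
          (hcne i 3 1 (by omega) (by omega) (by omega))
          (hcne i 3 0 (by omega) (by omega) (by omega))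
          (hvne _)
          (hcne i 4 1 (by omega) (by omega) (by omega))
          (hcne i 4 0 (by omega) (by omega) (by omega))
          (hvne _) (hvne _) (hvne _)
      · -- S311: center c m = c (i + 1)
        set i := m - ((1:ℕ) : ZMod t) with hi
        have hm2 : m = i + ((1:ℕ) : ZMod t) := by rw [hi]; ring
        have hvn : ∀ a : ℕ, a < t → a ≠ 1 → ¬ G.Adj v (c (i + (a : ZMod t))) := by
          intro a ha ha2 hadj
          have := honly _ hadj
          rw [hm2] at this
          exact hne a 1 ha (by omega) ha2 (add_left_cancel this)
        refine noS311 hFfree (c (i + ((1:ℕ):ZMod t))) (c (i + ((2:ℕ):ZMod t)))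
          (c (i + ((3:ℕ):ZMod t))) (c (i + ((4:ℕ):ZMod t))) (c (i + ((0:ℕ):ZMod t))) v
          (hadjc i 1) (hadjc i 2) (hadjc i 3) (hadjc i 0).symm (by rw [← hm2]; exact hm.symm)
          (hnadj i 1 3 (by omega) (by omega) (by omega) (by omega))
          (hnadj i 1 4 (by omega) (by omega) (by omega) (by omega))
          (hnadj i 2 4 (by omega) (by omega) (by omega) (by omega))
          (fun h => hnadj i 0 2 (by omega) (by omega) (by omega) (by omega) h.symm)
          (fun h => hvn 2 (by omega) (by omega) h.symm)
          (fun h => hnadj i 0 3 (by omega) (by omega) (by omega) (by omega) h.symm)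
          (fun h => hvn 3 (by omega) (by omega) h.symm)
          (fun h => hnadj i 0 4 (by omega) (by omega) (by omega) (by omega) h.symm)
          (fun h => hvn 4 (by omega) (by omega) h.symm)
          (fun h => hvn 0 (by omega) (by omega) h.symm)
          (hcne i 1 3 (by omega) (by omega) (by omega))
          (hcne i 1 4 (by omega) (by omega) (by omega))
          (hcne i 2 4 (by omega) (by omega) (by omega))
          (hcne i 2 0 (by omega) (by omega) (by omega))
          (hvne _)
          (hcne i 3 0 (by omega) (by omega) (by omega))
          (hvne _)
          (hcne i 4 0 (by omega) (by omega) (by omega))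
          (hvne _) (hvne _)
  -- main
  intro v hv
  by_cases hnb : ∃ m, G.Adj v (c m)
  · obtain ⟨m, hm⟩ := hnb
    exact claimA2 v hv m hm
  · exfalso
    push_neg at hnb
    have step : ∀ x y : V, (x ∉ Set.range c ∧ ∀ l, ¬G.Adj x (c l)) → G.Adj x y →
        (y ∉ Set.range c ∧ ∀ l, ¬G.Adj y (c l)) := by
      rintro x y ⟨hxr, hxn⟩ hxy
      have hyr : y ∉ Set.range c := by
        rintro ⟨l, rfl⟩
        exact hxn l hxy
      refine ⟨hyr, ?_⟩
      by_contra hcon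
      push_neg at hcon
      obtain ⟨m, hm⟩ := hcon
      obtain ⟨i, hi⟩ := claimA2 y hyr m hm
      set b := i - 1 with hb
      have hb2 : b + ((2:ℕ) : ZMod t) = i + 1 := by rw [hb]; push_cast; ring
      have hb0 : b + ((0:ℕ) : ZMod t) = i - 1 := by rw [hb]; push_cast; ring
      have hy0 : G.Adj y (c (b + ((0:ℕ) : ZMod t))) := (hi _).2 (Or.inl hb0)
      have hy2 : G.Adj y (c (b + ((2:ℕ) : ZMod t))) := (hi _).2 (Or.inr hb2)
      have hyonly : ∀ a : ℕ, a < t → a ≠ 0 → a ≠ 2 → ¬ G.Adj y (c (b + (a : ZMod t))) := by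
        intro a ha ha0 ha2 hadj
        rcases (hi _).1 hadj with h | h
        · have h' : b + (a : ZMod t) = b + ((0:ℕ) : ZMod t) := by rw [h]; norm_num
          exact hne a 0 ha (by omega) ha0 (add_left_cancel h')
        · have h' : b + (a : ZMod t) = b + ((2:ℕ) : ZMod t) := by rw [h, ← hb2]
          exact hne a 2 ha (by omega) ha2 (add_left_cancel h')
      have hxyne : x ≠ y := hxy.ne
      have hyne : ∀ a : ZMod t, c a ≠ y := fun a h => hyr ⟨a, h⟩
      have hxne : ∀ a : ZMod t, c a ≠ x := fun a h => hxr ⟨a, h⟩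
      have hxn' : ∀ a : ZMod t, ¬ G.Adj (c a) x := fun a h => hxn a h.symm
      rcases hF with rfl | rfl
      · -- S221 with v0 = c(b+2), v1 = c(b+3), v2 = c(b+4), v3 = y, v4 = x, v5 = c(b+1)
        refine noS221 hFfree (c (b + ((2:ℕ):ZMod t))) (c (b + ((3:ℕ):ZMod t)))
          (c (b + ((4:ℕ):ZMod t))) y x (c (b + ((1:ℕ):ZMod t)))
          (hadjc b 2) (hadjc b 3) hy2.symm hxy.symm (hadjc b 1).symm
          (hnadj b 2 4 (by omega) (by omega) (by omega) (by omega))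
          (hxn' _)
          (fun h => hyonly 3 (by omega) (by omega) (by omega) h.symm)
          (hxn' _)
          (fun h => hnadj b 1 3 (by omega) (by omega) (by omega) (by omega) h.symm)
          (fun h => hyonly 4 (by omega) (by omega) (by omega) h.symm)
          (hxn' _)
          (fun h => hnadj b 1 4 (by omega) (by omega) (by omega) (by omega) h.symm)
          (hyonly 1 (by omega) (by omega) (by omega))
          (hxn _)
          (hcne b 2 4 (by omega) (by omega) (by omega))
          (hxne _)
          (hyne _)
          (hxne _)
          (hcne b 3 1 (by omega) (by omega) (by omega))
          (hyne _)
          (hxne _)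
          (hcne b 4 1 (by omega) (by omega) (by omega))
          (fun h => hyne _ h.symm)
          (fun h => hxne _ h.symm)
      · -- S311 with v0 = y, v1 = c(b+2), v2 = c(b+3), v3 = c(b+4), v4 = c(b+0), v5 = x
        refine noS311 hFfree y (c (b + ((2:ℕ):ZMod t))) (c (b + ((3:ℕ):ZMod t)))
          (c (b + ((4:ℕ):ZMod t))) (c (b + ((0:ℕ):ZMod t))) x
          hy2 (hadjc b 2) (hadjc b 3) hy0 hxy.symm
          (hyonly 3 (by omega) (by omega) (by omega))
          (hyonly 4 (by omega) (by omega) (by omega))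
          (hnadj b 2 4 (by omega) (by omega) (by omega) (by omega))
          (fun h => hnadj b 0 2 (by omega) (by omega) (by omega) (by omega) h.symm)
          (hxn' _)
          (fun h => hnadj b 0 3 (by omega) (by omega) (by omega) (by omega) h.symm)
          (hxn' _)
          (fun h => hnadj b 0 4 (by omega) (by omega) (by omega) (by omega) h.symm)
          (hxn' _)
          (hxn' _)
          (fun h => hyne _ h.symm)
          (fun h => hyne _ h.symm)
          (hcne b 2 4 (by omega) (by omega) (by omega))
          (hcne b 2 0 (by omega) (by omega) (by omega))
          (fun h => hxne _ h)
          (hcne b 3 0 (by omega) (by omega) (by omega))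
          (hxne _)
          (hcne b 4 0 (by omega) (by omega) (by omega))
          (hxne _) (hxne _)
    obtain ⟨w⟩ := hconn.preconnected v (c 0)
    have closure : ∀ (a b : V) (w : G.Walk a b),
        (a ∉ Set.range c ∧ ∀ l, ¬G.Adj a (c l)) → (b ∉ Set.range c ∧ ∀ l, ¬G.Adj b (c l)) := by
      intro a b w
      induction w with
      | nil => exact id
      | cons h p ih => intro ha; exact ih (step _ _ ha h)
    exact (closure v (c 0) w ⟨hv, hnb⟩).1 ⟨0, rfl⟩
end

section
/- Let h be a homomorphism from G_{q,p} to a graph H whose odd girth is q and which contains no C_4 subgraph, where q ≥ 3 is odd. Then for every j with q ≤ j ≤ qp−3, h(j) = h(j−q). -/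
open SimpleGraph

/-- The graph `G_{q,p}` on `ZMod (q*p - 2)`, where `i` is adjacent to `i ± 1` and to
`i + q*k - 1` (and symmetrically) for `k = 1, ..., p-1`. -/
def Gqp (q p : ℕ) : SimpleGraph (ZMod (q * p - 2)) :=
  SimpleGraph.fromRel (fun i j =>
    j = i + 1 ∨ ∃ k : ℕ, 1 ≤ k ∧ k ≤ p - 1 ∧ j = i + (↑(q * k) : ZMod (q * p - 2)) - 1)

/-- The odd girth of a graph: the least length of an odd cycle (`⊤` if none exists). -/
noncomputable def oddGirth {V : Type*} (G : SimpleGraph V) : ℕ∞ :=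
  sInf {n : ℕ∞ | ∃ m : ℕ, n = m ∧ Odd m ∧ ∃ (u : V) (w : G.Walk u u), w.IsCycle ∧ w.length = m}

/-- `H` contains no 4-cycle as a (not necessarily induced) subgraph. -/
def NoC4Subgraph {W : Type*} (H : SimpleGraph W) : Prop :=
  ¬ ∃ a b c d : W, a ≠ c ∧ b ≠ d ∧ H.Adj a b ∧ H.Adj b c ∧ H.Adj c d ∧ H.Adj d a

section Aux

variable {W : Type*} {H : SimpleGraph W}

/-- If a path from `y` to `u` contains the edge `s(u,y)`, it has length 1. -/
lemma path_edge_end {y u : W} (p : H.Walk y u) (hp : p.IsPath)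
    (he : s(u, y) ∈ p.edges) : p.length = 1 := by
  cases p with
  | nil => simp at he
  | @cons _ v _ hadj r =>
    rw [SimpleGraph.Walk.edges_cons, List.mem_cons] at he
    rcases he with he | he
    · rw [Sym2.eq_iff] at he
      rcases he with ⟨h1, h2⟩ | ⟨h1, h2⟩
      · subst h1; subst h2
        exact absurd hadj (H.loopless.irrefl _)
      · subst h1
        have : r = Walk.nil := (Walk.isPath_iff_eq_nil (p := r)).mp hp.of_cons
        simp [this]
    · exfalso
      have hy : y ∈ r.support := r.snd_mem_support_of_mem_edges he
      exact ((Walk.cons_isPath_iff hadj r).mp hp).2 hy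

/-- An odd closed walk contains an odd cycle of no greater length. -/
lemma exists_odd_cycle_of_odd_closed_walk :
    ∀ n : ℕ, Odd n → ∀ (u : W) (w : H.Walk u u), w.length = n →
      ∃ (v : W) (c : H.Walk v v), c.IsCycle ∧ Odd c.length ∧ c.length ≤ n := by
  intro n
  induction n using Nat.strong_induction_on with
  | _ n ih =>
    classical
    intro hodd u w hlen
    by_cases hnd : w.support.tail.Nodup
    · -- `w` itself is a cycle
      cases w with
      | nil =>
        rw [← hlen] at hodd
        simp [Nat.odd_iff] at hodd
      | @cons _ y _ hadj r =>
        have hr : r.IsPath := Walk.IsPath.mk' (by simpa using hnd)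
        have hne : s(u, y) ∉ r.edges := by
          intro he
          have h1 := path_edge_end r hr he
          rw [Walk.length_cons, h1] at hlen
          rw [← hlen] at hodd
          simp [Nat.odd_iff] at hodd
        have hcyc : (Walk.cons hadj r).IsCycle :=
          (Walk.cons_isCycle_iff r hadj).mpr ⟨hr, hne⟩
        exact ⟨u, _, hcyc, hlen ▸ hodd, hlen ▸ le_refl _⟩
    · -- split the walk at a repeated vertex and recurse
      obtain ⟨x, hx2⟩ : ∃ x, 2 ≤ w.support.tail.count x := by
        by_contra hcon
        push_neg at hcon
        exact hnd (List.nodup_iff_count_le_one.mpr fun a => by have := hcon a; omega)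
      have hxt : x ∈ w.support.tail := by
        rw [← List.count_pos_iff]; omega
      have hxmem : x ∈ w.support := List.mem_of_mem_tail hxt
      have hcount : 2 ≤ (w.rotate x hxmem).support.tail.count x := by
        rw [(w.support_rotate x hxmem).perm.count_eq]; exact hx2
      have hlenrot : (w.rotate x hxmem).length = n := by
        have h1 := congrArg Walk.length (w.take_spec hxmem)
        rw [Walk.length_append] at h1
        simp only [Walk.rotate, Walk.length_append]
        omega
      have hn0 : n ≠ 0 := by
        rintro rfl
        simp [Nat.odd_iff] at hodd
      have hnotnil : ¬ (w.rotate x hxmem).Nil := by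
        rw [Walk.nil_iff_length_eq]
        omega
      obtain ⟨y, hadj, r, hc⟩ := Walk.not_nil_iff.mp hnotnil
      rw [hc] at hcount hlenrot
      simp only [Walk.support_cons, List.tail_cons] at hcount
      have hxr : x ∈ r.support := by
        rw [← List.count_pos_iff]; omega
      have hsplit := r.take_spec hxr
      have hlen2 : (r.takeUntil x hxr).length + (r.dropUntil x hxr).length = r.length := by
        have := congrArg Walk.length hsplit
        rwa [Walk.length_append] at this
      have hct : (r.takeUntil x hxr).support.count x = 1 :=
        r.count_support_takeUntil_eq_one hxr
      have hdpos : 1 ≤ (r.dropUntil x hxr).length := by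
        have h2 : 2 ≤ ((r.takeUntil x hxr).append (r.dropUntil x hxr)).support.count x := by
          rw [hsplit]; exact hcount
        rw [Walk.support_append, List.count_append, hct] at h2
        have h3 : x ∈ (r.dropUntil x hxr).support.tail := by
          rw [← List.count_pos_iff]; omega
        have h4 := List.length_pos_of_mem h3
        have h5 : (r.dropUntil x hxr).support.length = (r.dropUntil x hxr).length + 1 :=
          Walk.length_support _
        have h6 : (r.dropUntil x hxr).support.tail.length
            = (r.dropUntil x hxr).support.length - 1 := List.length_tail
        omega
      have hrn : r.length = n - 1 := by
        rw [Walk.length_cons] at hlenrot; omega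
      rcases Nat.even_or_odd ((r.takeUntil x hxr).length + 1) with he1 | ho1
      · -- the second piece is odd
        have hod : Odd (r.dropUntil x hxr).length := by
          rcases hodd with ⟨k, hk⟩
          rw [Nat.even_iff] at he1
          rw [Nat.odd_iff]
          omega
        obtain ⟨v, c, hcyc, hcodd, hcle⟩ :=
          ih (r.dropUntil x hxr).length (by omega) hod x (r.dropUntil x hxr) rfl
        exact ⟨v, c, hcyc, hcodd, by omega⟩
      · -- the first piece is odd
        obtain ⟨v, c, hcyc, hcodd, hcle⟩ :=
          ih ((r.takeUntil x hxr).length + 1) (by omega) ho1 x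
            (Walk.cons hadj (r.takeUntil x hxr)) (by simp)
        exact ⟨v, c, hcyc, hcodd, by omega⟩

/-- Walks along consecutive images. -/
lemma chain_walk {m : ℕ} (f : ZMod m → W)
    (hadj : ∀ a, H.Adj (f a) (f (a + 1))) :
    ∀ (n : ℕ) (a : ZMod m), ∃ w : H.Walk (f a) (f (a + (n : ZMod m))), w.length = n := by
  intro n
  induction n with
  | zero => exact fun a => ⟨Walk.nil.copy rfl (congrArg f (by simp)), by simp⟩
  | succ n ih =>
    intro a
    obtain ⟨w, hw⟩ := ih (a + 1)
    refine ⟨(Walk.cons (hadj a) w).copy rfl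
      (congrArg f (show a + 1 + (n : ZMod m) = a + ((n + 1 : ℕ) : ZMod m) by push_cast; ring)),
      by simp [hw]⟩

end Aux

/-- If `h` is a homomorphism from `G_{q,p}` to a graph `H` of odd girth `q` without `C₄`
subgraphs (`q ≥ 3` odd), then `h(j) = h(j - q)` for every `q ≤ j ≤ qp - 3`. -/
theorem stmt13 {W : Type*} (q p : ℕ) (hq : Odd q) (hq3 : 3 ≤ q) (hp : 1 ≤ p)
    (H : SimpleGraph W) (hgirth : oddGirth H = (q : ℕ∞)) (hC4 : NoC4Subgraph H)
    (h : Gqp q p →g H) :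
    ∀ j : ℕ, q ≤ j → j ≤ q * p - 3 →
      h ((j : ℕ) : ZMod (q * p - 2)) = h (((j - q : ℕ) : ℕ) : ZMod (q * p - 2)) := by
  intro j hjq hjle
  have hp2 : 2 ≤ p := by
    by_contra hcon
    have hp1 : p = 1 := by omega
    subst hp1
    rw [mul_one] at hjle
    omega
  have h2q : 2 * q ≤ q * p := by
    calc 2 * q = q * 2 := by ring
    _ ≤ q * p := Nat.mul_le_mul_left q hp2
  haveI : NeZero (q * p - 2) := ⟨by omega⟩
  have castne : ∀ x : ℕ, 0 < x → x < q * p - 2 → ((x : ZMod (q * p - 2)) ≠ 0) := by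
    intro x hx0 hxM hEq
    have hv := ZMod.val_cast_of_lt hxM
    rw [hEq, ZMod.val_zero] at hv
    omega
  have adj1 : ∀ a : ZMod (q * p - 2), (Gqp q p).Adj a (a + 1) := by
    intro a
    rw [Gqp, SimpleGraph.fromRel_adj]
    refine ⟨?_, Or.inl (Or.inl rfl)⟩
    intro hEq
    have h1 : a + (1 : ZMod (q * p - 2)) = a + 0 := by rw [add_zero, ← hEq]
    have h2 := add_left_cancel h1
    exact castne 1 one_pos (by omega) (by rw [Nat.cast_one]; exact h2)
  have adjq : ∀ a : ZMod (q * p - 2),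
      (Gqp q p).Adj a (a + (q : ZMod (q * p - 2)) - 1) := by
    intro a
    rw [Gqp, SimpleGraph.fromRel_adj]
    constructor
    · intro hEq
      have h1 : a + ((q : ZMod (q * p - 2)) - 1) = a + 0 := by
        rw [add_zero, ← add_sub_assoc, ← hEq]
      have h2 := add_left_cancel h1
      refine castne (q - 1) (by omega) (by omega) ?_
      rw [Nat.cast_sub (by omega : 1 ≤ q), Nat.cast_one]
      exact h2
    · exact Or.inl (Or.inr ⟨1, le_refl 1, by omega, by rw [mul_one]⟩)
  set a0 : ZMod (q * p - 2) := ((j - q : ℕ) : ZMod (q * p - 2)) with ha0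
  have key : h (a0 + (q : ZMod (q * p - 2))) = h a0 := by
    by_contra hne
    have hBD : h (a0 + 1) ≠ h (a0 + (q : ZMod (q * p - 2)) - 1) := by
      intro hBDeq
      obtain ⟨w, hw⟩ := chain_walk (fun a => h a) (fun a => h.map_adj (adj1 a)) (q - 2) (a0 + 1)
      have hcast : (a0 + 1) + ((q - 2 : ℕ) : ZMod (q * p - 2))
          = a0 + (q : ZMod (q * p - 2)) - 1 := by
        rw [Nat.cast_sub (by omega : 2 ≤ q)]
        push_cast
        ring
      obtain ⟨v, c, hcyc, hcodd, hcle⟩ :=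
        exists_odd_cycle_of_odd_closed_walk (q - 2)
          (by rw [Nat.odd_iff] at hq ⊢; omega) _
          (w.copy rfl (by rw [hcast, ← hBDeq])) (by simp [hw])
      have hmem : ((c.length : ℕ∞)) ∈ {n : ℕ∞ | ∃ m : ℕ, n = m ∧ Odd m ∧
          ∃ (u : W) (w : H.Walk u u), w.IsCycle ∧ w.length = m} :=
        ⟨c.length, rfl, hcodd, v, c, hcyc, rfl⟩
      have hle : oddGirth H ≤ (c.length : ℕ∞) := sInf_le hmem
      rw [hgirth] at hle
      have hqle : q ≤ c.length := by exact_mod_cast hle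
      omega
    refine hC4 ⟨h a0, h (a0 + 1), h (a0 + (q : ZMod (q * p - 2))),
      h (a0 + (q : ZMod (q * p - 2)) - 1), fun hEq => hne hEq.symm, hBD, ?_, ?_, ?_, ?_⟩
    · exact h.map_adj (adj1 a0)
    · have := h.map_adj (adjq (a0 + 1))
      rwa [show a0 + 1 + (q : ZMod (q * p - 2)) - 1 = a0 + (q : ZMod (q * p - 2)) by ring]
        at this
    · have := h.map_adj (adj1 (a0 + (q : ZMod (q * p - 2)) - 1))
      rw [show a0 + (q : ZMod (q * p - 2)) - 1 + 1 = a0 + (q : ZMod (q * p - 2)) by ring]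
        at this
      exact this.symm
    · exact (h.map_adj (adjq a0)).symm
  have hj : ((j : ℕ) : ZMod (q * p - 2)) = a0 + (q : ZMod (q * p - 2)) := by
    rw [ha0, ← Nat.cast_add]
    congr 1
    omega
  rw [hj]
  exact key
end

section
/- Let q ≥ 3 be odd. For every p ≥ 1 the graph G_{q,p} does not contain an induced matching of size q, i.e., G_{q,p} is qK_2-free. -/
open SimpleGraph

/-- `nK₂`: the disjoint union of `n` edges (a perfect matching on `2n` vertices). -/
def nK2 (n : ℕ) : SimpleGraph (Fin n × Fin 2) where
  Adj a b := a.1 = b.1 ∧ a.2 ≠ b.2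
  symm := ⟨by intro a b ⟨h1, h2⟩; exact ⟨h1.symm, h2.symm⟩⟩
  loopless := ⟨by intro a ⟨h1, h2⟩; exact h2 rfl⟩

lemma core_lemma (q : ℕ) (hq3 : 3 ≤ q) (u v : Fin q → ℕ)
    (huv : ∀ t, u t < v t)
    (hd : ∀ t t' : Fin q, t ≠ t' → ∀ x, (x = u t ∨ x = v t) → ∀ y, (y = u t' ∨ y = v t') → x ≠ y)
    (H1 : ∀ t, v t = u t + 1 ∨ ((v t : ZMod q) = (u t : ZMod q) - 1))
    (H2 : ∀ t t' : Fin q, t ≠ t' → ∀ x, (x = u t ∨ x = v t) → ∀ y, (y = u t' ∨ y = v t') →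
      x < y → ¬((y : ZMod q) = (x : ZMod q) - 1)) : False := by
  classical
  haveI : NeZero q := ⟨by omega⟩
  haveI : Fact (1 < q) := ⟨by omega⟩
  have hone : (1 : ZMod q) ≠ 0 := one_ne_zero
  set D : Fin q → ZMod q := fun t =>
    if v t = u t + 1 then ((u t : ℕ) : ZMod q) else ((v t : ℕ) : ZMod q) with hDdef
  have hDA : ∀ t, v t = u t + 1 → D t = ((u t : ℕ) : ZMod q) := by
    intro t h; simp only [hDdef]; rw [if_pos h]
  have hDB : ∀ t, ¬(v t = u t + 1) →
      D t = ((v t : ℕ) : ZMod q) ∧ ((v t : ℕ) : ZMod q) = ((u t : ℕ) : ZMod q) - 1 := by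
    intro t h
    exact ⟨by simp only [hDdef]; rw [if_neg h], (H1 t).resolve_left h⟩
  have hDinj : Function.Injective D := by
    intro t1 t2 heq
    by_contra hne
    by_cases h1 : v t1 = u t1 + 1 <;> by_cases h2 : v t2 = u t2 + 1
    · -- AA
      rw [hDA t1 h1, hDA t2 h2] at heq
      have hne12 : u t1 ≠ u t2 := hd t1 t2 hne _ (Or.inl rfl) _ (Or.inl rfl)
      rcases hne12.lt_or_gt with hlt | hlt
      · have hvu : v t1 < u t2 := by
          have := hd t1 t2 hne _ (Or.inr rfl) _ (Or.inl rfl)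
          omega
        exact H2 t1 t2 hne _ (Or.inr rfl) _ (Or.inl rfl) hvu
          (by rw [h1]; push_cast; rw [heq]; ring)
      · have hvu : v t2 < u t1 := by
          have := hd t2 t1 (Ne.symm hne) _ (Or.inr rfl) _ (Or.inl rfl)
          omega
        exact H2 t2 t1 (Ne.symm hne) _ (Or.inr rfl) _ (Or.inl rfl) hvu
          (by rw [h2]; push_cast; rw [heq]; ring)
    · -- A B
      obtain ⟨hD2, hB2⟩ := hDB t2 h2
      rw [hDA t1 h1, hD2] at heq   -- heq : ↑(u t1) = ↑(v t2)
      have hnev : v t1 ≠ v t2 := hd t1 t2 hne _ (Or.inr rfl) _ (Or.inr rfl)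
      rcases hnev.lt_or_gt with hlt | hlt
      · exact H2 t1 t2 hne _ (Or.inr rfl) _ (Or.inr rfl) hlt
          (by rw [h1]; push_cast; rw [heq]; ring)
      · have hvu : v t2 < u t1 := by
          have := hd t2 t1 (Ne.symm hne) _ (Or.inr rfl) _ (Or.inl rfl)
          omega
        have hlt2 : u t2 < u t1 := lt_trans (huv t2) hvu
        exact H2 t2 t1 (Ne.symm hne) _ (Or.inl rfl) _ (Or.inl rfl) hlt2 (by rw [heq]; exact hB2)
    · -- B A
      obtain ⟨hD1, hB1⟩ := hDB t1 h1
      rw [hD1, hDA t2 h2] at heq   -- heq : ↑(v t1) = ↑(u t2)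
      have hnev : v t2 ≠ v t1 := hd t2 t1 (Ne.symm hne) _ (Or.inr rfl) _ (Or.inr rfl)
      rcases hnev.lt_or_gt with hlt | hlt
      · exact H2 t2 t1 (Ne.symm hne) _ (Or.inr rfl) _ (Or.inr rfl) hlt
          (by rw [h2]; push_cast; rw [← heq]; ring)
      · have hvu : v t1 < u t2 := by
          have := hd t1 t2 hne _ (Or.inr rfl) _ (Or.inl rfl)
          omega
        have hlt2 : u t1 < u t2 := lt_trans (huv t1) hvu
        exact H2 t1 t2 hne _ (Or.inl rfl) _ (Or.inl rfl) hlt2 (by rw [← heq]; exact hB1)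
    · -- B B
      obtain ⟨hD1, hB1⟩ := hDB t1 h1
      obtain ⟨hD2, hB2⟩ := hDB t2 h2
      rw [hD1, hD2] at heq   -- heq : ↑(v t1) = ↑(v t2)
      have hneu : u t1 ≠ u t2 := hd t1 t2 hne _ (Or.inl rfl) _ (Or.inl rfl)
      rcases hneu.lt_or_gt with hlt | hlt
      · have hlt2 : u t1 < v t2 := lt_trans hlt (huv t2)
        exact H2 t1 t2 hne _ (Or.inl rfl) _ (Or.inr rfl) hlt2 (by rw [← heq]; exact hB1)
      · have hlt2 : u t2 < v t1 := lt_trans hlt (huv t1)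
        exact H2 t2 t1 (Ne.symm hne) _ (Or.inl rfl) _ (Or.inr rfl) hlt2 (by rw [heq]; exact hB2)
  have hcard : Fintype.card (Fin q) = Fintype.card (ZMod q) := by simp [ZMod.card]
  have hDsurj : Function.Surjective D :=
    ((Fintype.bijective_iff_injective_and_card D).mpr ⟨hDinj, hcard⟩).surjective
  have htwo : ∀ (c : ZMod q) (t : Fin q), ∃ t', t' ≠ t ∧ ∃ z, (z = u t' ∨ z = v t') ∧
      ((z : ℕ) : ZMod q) = c := by
    intro c t
    obtain ⟨t1, ht1⟩ := hDsurj c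
    obtain ⟨t2, ht2⟩ := hDsurj (c - 1)
    have ht12 : t1 ≠ t2 := by
      intro h
      rw [h, ht2] at ht1
      exact hone (sub_eq_self.mp ht1)
    have he1 : ∃ z, (z = u t1 ∨ z = v t1) ∧ ((z : ℕ) : ZMod q) = c := by
      by_cases h : v t1 = u t1 + 1
      · exact ⟨u t1, Or.inl rfl, by rw [← ht1, hDA t1 h]⟩
      · exact ⟨v t1, Or.inr rfl, by rw [← ht1, (hDB t1 h).1]⟩
    have he2 : ∃ z, (z = u t2 ∨ z = v t2) ∧ ((z : ℕ) : ZMod q) = c := by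
      by_cases h : v t2 = u t2 + 1
      · refine ⟨v t2, Or.inr rfl, ?_⟩
        rw [h]
        push_cast
        rw [hDA t2 h] at ht2
        rw [ht2]
        ring
      · refine ⟨u t2, Or.inl rfl, ?_⟩
        have hB := (hDB t2 h).2
        have hD := (hDB t2 h).1
        have : ((u t2 : ℕ) : ZMod q) = ((v t2 : ℕ) : ZMod q) + 1 := by rw [hB]; ring
        have hvc : ((v t2 : ℕ) : ZMod q) = c - 1 := by rw [← hD]; exact ht2
        rw [this, hvc]
        ring
    rcases eq_or_ne t1 t with h | h
    · exact ⟨t2, by rw [← h]; exact ht12.symm, he2⟩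
    · exact ⟨t1, h, he1⟩
  set S : ZMod q → Set ℕ := fun c => {m | ∃ t, (m = u t ∨ m = v t) ∧ ((m : ℕ) : ZMod q) = c}
    with hSdef
  have hSne : ∀ c, (S c).Nonempty := by
    intro c
    obtain ⟨t', _, z, hz, hzr⟩ := htwo c (Classical.arbitrary (Fin q))
    exact ⟨z, t', hz, hzr⟩
  set F : ZMod q → ℕ := fun c => sInf (S c) with hFdef
  have hstep : ∀ c : ZMod q, F c < F (c + 1) := by
    intro c
    have hx : F (c + 1) ∈ S (c + 1) := Nat.sInf_mem (hSne (c + 1))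
    obtain ⟨t, hxe, hxr⟩ := hx
    obtain ⟨t', ht', z, hze, hzr⟩ := htwo c t
    have hzx : z ≠ F (c + 1) := by
      intro h
      rw [h, hxr] at hzr
      exact hone (by
        have : c + 1 - c = (0 : ZMod q) := by rw [hzr]; ring
        simpa using this)
    have hlt : z < F (c + 1) := by
      rcases hzx.lt_or_gt with h | h
      · exact h
      · exfalso
        refine H2 t t' ht'.symm _ hxe _ hze h ?_
        rw [hzr, hxr]; ring
    exact lt_of_le_of_lt (Nat.sInf_le ⟨t', hze, hzr⟩) hlt
  have chain : ∀ k : ℕ, F 0 < F (((k + 1 : ℕ) : ZMod q)) := by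
    intro k
    induction k with
    | zero => simpa using hstep 0
    | succ m ih =>
        have h2 := hstep ((m + 1 : ℕ) : ZMod q)
        have hcast : ((m + 1 : ℕ) : ZMod q) + 1 = ((m + 1 + 1 : ℕ) : ZMod q) := by push_cast; ring
        rw [hcast] at h2
        exact ih.trans h2
  have hfin := chain (q - 1)
  rw [show q - 1 + 1 = q by omega, ZMod.natCast_self] at hfin
  exact lt_irrefl _ hfin

lemma succ_val {n : ℕ} [NeZero n] (hn : 1 < n) (a b : ZMod n) (h : b = a + 1) (hb : b ≠ 0) :
    b.val = a.val + 1 := by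
  haveI : Fact (1 < n) := ⟨hn⟩
  have hv : b.val = (a.val + 1) % n := by rw [h, ZMod.val_add, ZMod.val_one]
  have hbv : b.val ≠ 0 := fun h0 => hb ((ZMod.val_eq_zero b).mp h0)
  have hav := ZMod.val_lt a
  by_cases hc : a.val + 1 < n
  · rw [hv, Nat.mod_eq_of_lt hc]
  · exfalso
    apply hbv
    rw [hv, show a.val + 1 = n by omega, Nat.mod_self]

lemma chord_val (q p k : ℕ) (hq3 : 3 ≤ q) (hqp : 2 * q + 3 ≤ q * p) (hk1 : 1 ≤ k)
    (hkp : k ≤ p - 1) (a b : ZMod (q * p - 2))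
    (h : b = a + ((q * k : ℕ) : ZMod (q * p - 2)) - 1) :
    a.val ≠ b.val ∧
      ((max a.val b.val : ℕ) : ZMod q) = ((min a.val b.val : ℕ) : ZMod q) - 1 := by
  haveI : NeZero (q * p - 2) := ⟨by omega⟩
  have hp0 : p ≠ 0 := by rintro rfl; rw [Nat.mul_zero] at hqp; omega
  have hqk : q ≤ q * k := Nat.le_mul_of_pos_right q (by omega)
  have hbound : q * k + q ≤ q * p := by
    have h1 : q * (k + 1) ≤ q * p := Nat.mul_le_mul le_rfl (by omega)
    rw [Nat.mul_succ] at h1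
    exact h1
  obtain ⟨d, hdq⟩ : ∃ d, q * k = d + 1 := ⟨q * k - 1, by omega⟩
  have hdlt : d < q * p - 2 := by omega
  have hd2 : 2 ≤ d := by omega
  have h' : b = a + ((d : ℕ) : ZMod (q * p - 2)) := by rw [h, hdq]; push_cast; ring
  have hdval : ((d : ℕ) : ZMod (q * p - 2)).val = d := by
    rw [ZMod.val_natCast]; exact Nat.mod_eq_of_lt hdlt
  have hval : b.val = (a.val + d) % (q * p - 2) := by rw [h', ZMod.val_add, hdval]
  have hav := ZMod.val_lt a
  have hdqq : ((d : ℕ) : ZMod q) = -1 := by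
    have h0 : ((d + 1 : ℕ) : ZMod q) = 0 := by
      rw [← hdq]; push_cast; rw [ZMod.natCast_self]; ring
    push_cast at h0
    exact eq_neg_of_add_eq_zero_left h0
  by_cases hc : a.val + d < q * p - 2
  · have hb : b.val = a.val + d := by rw [hval, Nat.mod_eq_of_lt hc]
    refine ⟨by omega, ?_⟩
    rw [max_eq_right (by omega), min_eq_left (by omega), hb]
    push_cast
    rw [hdqq]
    ring
  · push_neg at hc
    have hb : b.val = a.val + d - (q * p - 2) := by
      rw [hval, Nat.mod_eq_sub_mod hc, Nat.mod_eq_of_lt (by omega)]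
    have hblt : b.val < a.val := by omega
    refine ⟨by omega, ?_⟩
    rw [max_eq_left (by omega), min_eq_right (by omega)]
    have hsum : a.val + d = b.val + (q * p - 2) := by omega
    have hncast : ((q * p - 2 : ℕ) : ZMod q) = -2 := by
      have hx : ((q * p - 2 : ℕ) : ZMod q) + 2 = 0 := by
        have h5 : ((q * p - 2 : ℕ) : ZMod q) + ((2 : ℕ) : ZMod q) = ((q * p - 2 + 2 : ℕ) : ZMod q) := by
          push_cast; ring
        rw [show ((2:ℕ) : ZMod q) = (2 : ZMod q) by push_cast; ring] at h5
        rw [h5, show q * p - 2 + 2 = q * p by omega]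
        push_cast
        rw [ZMod.natCast_self]
        ring
      exact eq_neg_of_add_eq_zero_left hx
    have hcast := congrArg (Nat.cast : ℕ → ZMod q) hsum
    push_cast at hcast
    rw [hdqq, hncast] at hcast
    linear_combination hcast

/-- For odd `q ≥ 3` and every `p ≥ 1`, the graph `G_{q,p}` contains no induced matching of
size `q`, i.e. it is `qK₂`-free. -/
theorem stmt15 (q : ℕ) (hq : Odd q) (hq3 : 3 ≤ q) :
    ∀ p : ℕ, 1 ≤ p → IsFreeOf (Gqp q p) (nK2 q) := by
  intro p hp s hnon
  obtain ⟨e⟩ := hnon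
  have hqp3 : 3 ≤ q * p := le_trans hq3 (Nat.le_mul_of_pos_right q (by omega))
  haveI : NeZero (q * p - 2) := ⟨by omega⟩
  set Wf : Fin q × Fin 2 → ZMod (q * p - 2) := fun x => ((e x : s) : ZMod (q * p - 2)) with hWf
  have hWinj : Function.Injective Wf := by
    intro x y hxy
    simp only [hWf] at hxy
    exact e.injective (Subtype.ext hxy)
  have hAdj : ∀ x y, (Gqp q p).Adj (Wf x) (Wf y) ↔ (x.1 = y.1 ∧ x.2 ≠ y.2) := by
    intro x y
    simp only [hWf]
    exact e.map_adj_iff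
  have hcardle : q * 2 ≤ q * p - 2 := by
    have h1 := Fintype.card_le_of_injective Wf hWinj
    simpa [ZMod.card, Fintype.card_prod] using h1
  have hp3 : 3 ≤ p := by
    by_contra hc
    push_neg at hc
    have : q * p ≤ q * 2 := Nat.mul_le_mul le_rfl (by omega)
    omega
  have hn2q : 2 * q + 3 ≤ q * p := by
    have h1 : q * 3 ≤ q * p := Nat.mul_le_mul le_rfl hp3
    have h2 : 2 * q + 3 ≤ q * 3 := by omega
    omega
  obtain ⟨σ, hσ⟩ : ∃ σ : ZMod (q * p - 2), ∀ x, Wf x + σ ≠ 0 := by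
    by_contra hcon
    push_neg at hcon
    have hsub : (Finset.univ : Finset (ZMod (q * p - 2))) ⊆
        Finset.univ.image (fun x => - Wf x) := by
      intro τ _
      obtain ⟨x, hx⟩ := hcon τ
      exact Finset.mem_image.mpr ⟨x, Finset.mem_univ x, neg_eq_of_add_eq_zero_right hx⟩
    have h1 := Finset.card_le_card hsub
    have h2 := Finset.card_image_le
      (s := (Finset.univ : Finset (Fin q × Fin 2))) (f := fun x => - Wf x)
    simp only [Finset.card_univ, ZMod.card, Fintype.card_prod, Fintype.card_fin] at h1 h2
    omega
  set V : Fin q × Fin 2 → ℕ := fun x => (Wf x + σ).val with hV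
  have hVinj : Function.Injective V := by
    intro x y hxy
    simp only [hV] at hxy
    have h1 : ((Wf x + σ).val : ZMod (q * p - 2)) = ((Wf y + σ).val : ZMod (q * p - 2)) :=
      congrArg _ hxy
    rw [ZMod.natCast_rightInverse (Wf x + σ), ZMod.natCast_rightInverse (Wf y + σ)] at h1
    exact hWinj (add_right_cancel h1)
  have hV0 : ∀ x, V x ≠ 0 := by
    intro x h0
    simp only [hV] at h0
    exact hσ x ((ZMod.val_eq_zero _).mp h0)
  have hVlt : ∀ x, V x < q * p - 2 := by
    intro x; simp only [hV]; exact ZMod.val_lt _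
  have hVcast : ∀ x, ((V x : ℕ) : ZMod (q * p - 2)) = Wf x + σ := by
    intro x; simp only [hV]; exact ZMod.natCast_rightInverse (Wf x + σ)
  have htrans : ∀ a b : ZMod (q * p - 2),
      (Gqp q p).Adj (a + σ) (b + σ) ↔ (Gqp q p).Adj a b := by
    intro a b
    simp only [Gqp, SimpleGraph.fromRel_adj]
    constructor
    · rintro ⟨hne', hrel⟩
      refine ⟨fun hh => hne' (by rw [hh]), ?_⟩
      rcases hrel with (hh | ⟨k, hk1, hk2, hh⟩) | (hh | ⟨k, hk1, hk2, hh⟩)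
      · exact Or.inl (Or.inl (by linear_combination hh))
      · exact Or.inl (Or.inr ⟨k, hk1, hk2, by linear_combination hh⟩)
      · exact Or.inr (Or.inl (by linear_combination hh))
      · exact Or.inr (Or.inr ⟨k, hk1, hk2, by linear_combination hh⟩)
    · rintro ⟨hne', hrel⟩
      refine ⟨fun hh => hne' (add_right_cancel hh), ?_⟩
      rcases hrel with (hh | ⟨k, hk1, hk2, hh⟩) | (hh | ⟨k, hk1, hk2, hh⟩)
      · exact Or.inl (Or.inl (by linear_combination hh))
      · exact Or.inl (Or.inr ⟨k, hk1, hk2, by linear_combination hh⟩)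
      · exact Or.inr (Or.inl (by linear_combination hh))
      · exact Or.inr (Or.inr ⟨k, hk1, hk2, by linear_combination hh⟩)
  have hAdjσ : ∀ x y, (Gqp q p).Adj (Wf x + σ) (Wf y + σ) ↔ (x.1 = y.1 ∧ x.2 ≠ y.2) :=
    fun x y => (htrans _ _).trans (hAdj x y)
  haveI : NeZero q := ⟨by omega⟩
  have hHtwo : ∀ i j : Fin q × Fin 2, i.1 ≠ j.1 → V i < V j →
      ¬(((V j : ℕ) : ZMod q) = ((V i : ℕ) : ZMod q) - 1) := by
    intro i j hij hlt hres
    set d : ℕ := V j - V i with hdd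
    have hd1 : 1 ≤ d := by omega
    have hdlt : d < q * p - 2 := by have := hVlt j; omega
    have hdvd : q ∣ d + 1 := by
      have hsub : ((d : ℕ) : ZMod q) = ((V j : ℕ) : ZMod q) - ((V i : ℕ) : ZMod q) := by
        rw [hdd, Nat.cast_sub (le_of_lt hlt)]
      have h0 : ((d + 1 : ℕ) : ZMod q) = 0 := by
        push_cast
        rw [hsub, hres]
        ring
      exact (ZMod.natCast_eq_zero_iff _ q).mp h0
    obtain ⟨m, hm⟩ := hdvd
    have hm1 : 1 ≤ m := by
      rcases Nat.eq_zero_or_pos m with h | h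
      · rw [h, Nat.mul_zero] at hm; omega
      · exact h
    have hmp : m ≤ p - 1 := by
      have hlt' : q * m < q * p := by omega
      have := Nat.lt_of_mul_lt_mul_left hlt'
      omega
    have hqm : ((q * m : ℕ) : ZMod (q * p - 2)) = ((d : ℕ) : ZMod (q * p - 2)) + 1 := by
      rw [← hm]; push_cast; ring
    have hVj : (V j : ℕ) = V i + d := by omega
    have hBeq : Wf j + σ = (Wf i + σ) + ((q * m : ℕ) : ZMod (q * p - 2)) - 1 := by
      rw [← hVcast i, ← hVcast j, hVj, hqm]
      push_cast
      ring
    have hadj : (Gqp q p).Adj (Wf i + σ) (Wf j + σ) := by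
      simp only [Gqp, SimpleGraph.fromRel_adj]
      refine ⟨?_, Or.inl (Or.inr ⟨m, hm1, hmp, hBeq⟩)⟩
      intro hEq
      have hveq : V i = V j := by simp only [hV]; exact congrArg ZMod.val hEq
      omega
    exact hij ((hAdjσ i j).mp hadj).1
  set u : Fin q → ℕ := fun t => min (V (t, 0)) (V (t, 1)) with hu
  set v : Fin q → ℕ := fun t => max (V (t, 0)) (V (t, 1)) with hv
  have hne01 : ∀ t : Fin q, V (t, 0) ≠ V (t, 1) := by
    intro t h
    have := hVinj h
    simp at this
  have huv : ∀ t, u t < v t := by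
    intro t; simp only [hu, hv]; exact min_lt_max.mpr (hne01 t)
  have hmem : ∀ t x, (x = u t ∨ x = v t) → ∃ a : Fin 2, x = V (t, a) := by
    intro t x hx
    rcases hx with rfl | rfl
    · simp only [hu]
      rcases min_choice (V (t, 0)) (V (t, 1)) with h | h
      · exact ⟨0, h⟩
      · exact ⟨1, h⟩
    · simp only [hv]
      rcases max_choice (V (t, 0)) (V (t, 1)) with h | h
      · exact ⟨0, h⟩
      · exact ⟨1, h⟩
  have hd' : ∀ t t' : Fin q, t ≠ t' → ∀ x, (x = u t ∨ x = v t) →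
      ∀ y, (y = u t' ∨ y = v t') → x ≠ y := by
    intro t t' htt x hx y hy hxy
    obtain ⟨a, rfl⟩ := hmem t x hx
    obtain ⟨b, rfl⟩ := hmem t' y hy
    exact htt (congrArg Prod.fst (hVinj hxy))
  have hH2 : ∀ t t' : Fin q, t ≠ t' → ∀ x, (x = u t ∨ x = v t) →
      ∀ y, (y = u t' ∨ y = v t') → x < y →
      ¬(((y : ℕ) : ZMod q) = ((x : ℕ) : ZMod q) - 1) := by
    intro t t' htt x hx y hy hlt
    obtain ⟨a, rfl⟩ := hmem t x hx
    obtain ⟨b, rfl⟩ := hmem t' y hy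
    exact hHtwo (t, a) (t', b) htt hlt
  have hH1 : ∀ t, v t = u t + 1 ∨ ((v t : ℕ) : ZMod q) = ((u t : ℕ) : ZMod q) - 1 := by
    intro t
    have hadj : (Gqp q p).Adj (Wf (t, 0) + σ) (Wf (t, 1) + σ) :=
      (hAdjσ (t, 0) (t, 1)).mpr ⟨rfl, show (0 : Fin 2) ≠ 1 by decide⟩
    rw [Gqp, SimpleGraph.fromRel_adj] at hadj
    obtain ⟨hne', hrel⟩ := hadj
    rcases hrel with (hh | ⟨k, hk1, hk2, hh⟩) | (hh | ⟨k, hk1, hk2, hh⟩)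
    · left
      have h10 := succ_val (show 1 < q * p - 2 by omega) _ _ hh (hσ (t, 1))
      have hplus : V (t, 1) = V (t, 0) + 1 := by simp only [hV]; exact h10
      simp only [hu, hv]
      rw [max_eq_right (by omega), min_eq_left (by omega), hplus]
    · right
      have hc := chord_val q p k hq3 hn2q hk1 hk2 _ _ hh
      simp only [hu, hv, hV]
      exact hc.2
    · left
      have h10 := succ_val (show 1 < q * p - 2 by omega) _ _ hh (hσ (t, 0))
      have hplus : V (t, 0) = V (t, 1) + 1 := by simp only [hV]; exact h10
      simp only [hu, hv]
      rw [max_eq_left (by omega), min_eq_right (by omega), hplus]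
    · right
      have hc := chord_val q p k hq3 hn2q hk1 hk2 _ _ hh
      have h2 := hc.2
      simp only [hu, hv, hV]
      rw [max_comm, min_comm]
      exact h2
  exact core_lemma q hq3 u v huv hd' hH1 hH2
end

section
/- Let q ≥ 5 be odd and p ≥ 1. The graph G_{q,p} contains no induced subgraph isomorphic to S_{2,2,2}, the spider obtained from three paths P_3 by identifying one endvertex of each (equivalently, the claw with each edge subdivided once). -/
open SimpleGraph

/-- The subdivided claw (spider) `S_{a,b,c}`: three paths with `a`, `b`, `c` edges glued at a
common endvertex `none`. -/
def spider (a b c : ℕ) : SimpleGraph (Option (Fin a ⊕ Fin b ⊕ Fin c)) :=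
  SimpleGraph.fromRel (fun u v =>
    match u, v with
    | none, some (Sum.inl i) => i.val = 0
    | none, some (Sum.inr (Sum.inl i)) => i.val = 0
    | none, some (Sum.inr (Sum.inr i)) => i.val = 0
    | some (Sum.inl i), some (Sum.inl j) => j.val = i.val + 1
    | some (Sum.inr (Sum.inl i)), some (Sum.inr (Sum.inl j)) => j.val = i.val + 1
    | some (Sum.inr (Sum.inr i)), some (Sum.inr (Sum.inr j)) => j.val = i.val + 1
    | _, _ => False)

section helpers
variable {q p : ℕ}

lemma qp_cast (hq5 : 5 ≤ q) (hp : 1 ≤ p) :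
    ((q * p : ℕ) : ZMod (q * p - 2)) = 2 := by
  have h5 : 5 ≤ q * p := le_trans hq5 (Nat.le_mul_of_pos_right q hp)
  have h : q * p = (q * p - 2) + 2 := by omega
  rw [h]
  push_cast [ZMod.natCast_self]
  ring

lemma adj_of_le (hq5 : 5 ≤ q) (hp : 1 ≤ p) {k : ℕ} (hk : k ≤ p) (i : ZMod (q * p - 2)) :
    (Gqp q p).Adj i (i + ((q * k : ℕ) : ZMod (q * p - 2)) - 1) := by
  have h5 : 5 ≤ q * p := le_trans hq5 (Nat.le_mul_of_pos_right q hp)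
  rw [Gqp, SimpleGraph.fromRel_adj]
  constructor
  · intro h
    have h1 : ((q * k : ℕ) : ZMod (q * p - 2)) = ((1 : ℕ) : ZMod (q * p - 2)) := by
      rw [Nat.cast_one]; linear_combination -h
    rw [ZMod.natCast_eq_natCast_iff] at h1
    rcases Nat.eq_zero_or_pos k with hk0 | hk1
    · subst hk0
      rw [Nat.mul_zero] at h1
      have hd := (Nat.modEq_iff_dvd' (Nat.zero_le 1)).mp h1
      have := Nat.le_of_dvd (by norm_num) hd
      omega
    · have hA : q ≤ q * k := Nat.le_mul_of_pos_right q hk1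
      have hAB : q * k ≤ q * p := Nat.mul_le_mul le_rfl hk
      have hd := (Nat.modEq_iff_dvd' (by omega : 1 ≤ q * k)).mp h1.symm
      have hle := Nat.le_of_dvd (by omega) hd
      have hAeq : q * k = q * p - 1 ∨ q * k = q * p := by omega
      rcases hAeq with hA1 | hA2
      · have hklt : k < p := by
          rcases Nat.lt_or_ge k p with h' | h'
          · exact h'
          · exfalso
            have : q * p ≤ q * k := Nat.mul_le_mul le_rfl h'
            omega
        have h2 : q * k ≤ q * (p - 1) := Nat.mul_le_mul le_rfl (by omega)
        have h3 : q * (p - 1) + q = q * p := by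
          rw [← Nat.mul_succ]; congr 1; omega
        omega
      · have hd1 : (q * p - 2) ∣ 1 := by
          have h4 := Nat.dvd_sub hd (dvd_refl (q * p - 2))
          have h5' : q * k - 1 - (q * p - 2) = 1 := by omega
          rwa [h5'] at h4
        have := Nat.le_of_dvd one_pos hd1
        omega
  · rcases Nat.eq_zero_or_pos k with hk0 | hk1
    · subst hk0
      right; left
      push_cast
      ring
    · rcases Nat.lt_or_ge k p with hkp | hkp
      · left; right
        exact ⟨k, hk1, by omega, rfl⟩
      · have hkp' : k = p := le_antisymm hk hkp
        subst hkp'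
        left; left
        rw [qp_cast hq5 hp]; ring

lemma adj_decomp (hq5 : 5 ≤ q) (hp : 1 ≤ p) {i j : ZMod (q * p - 2)}
    (h : (Gqp q p).Adj i j) :
    ∃ k, k ≤ p ∧ j = i + ((q * k : ℕ) : ZMod (q * p - 2)) - 1 := by
  rw [Gqp, SimpleGraph.fromRel_adj] at h
  obtain ⟨-, h | h⟩ := h
  · rcases h with h | ⟨k, hk1, hk2, hk3⟩
    · exact ⟨p, le_rfl, by rw [qp_cast hq5 hp, h]; ring⟩
    · exact ⟨k, by omega, hk3⟩
  · rcases h with h | ⟨k, hk1, hk2, hk3⟩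
    · exact ⟨0, Nat.zero_le _, by rw [h]; push_cast; ring⟩
    · refine ⟨p - k, by omega, ?_⟩
      have hnn : ((q * (p - k) : ℕ) : ZMod (q * p - 2)) + ((q * k : ℕ) : ZMod (q * p - 2)) = 2 := by
        rw [← Nat.cast_add, ← Nat.mul_add]
        have hpk : p - k + k = p := by omega
        rw [hpk, qp_cast hq5 hp]
      linear_combination -hnn - hk3

end helpers

/-- For odd `q ≥ 5` and every `p ≥ 1`, the graph `G_{q,p}` contains no induced subgraph
isomorphic to `S_{2,2,2}`. -/


theorem stmt17 (q p : ℕ) (hq : Odd q) (hq5 : 5 ≤ q) (hp : 1 ≤ p) :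
    IsFreeOf (Gqp q p) (spider 2 2 2) := by
  intro S hS
  obtain ⟨e⟩ := hS
  have hmap : ∀ a b, (spider 2 2 2).Adj a b →
      (Gqp q p).Adj ((e a : S) : ZMod (q * p - 2)) ((e b : S) : ZMod (q * p - 2)) :=
    fun a b h => e.map_adj_iff.mpr h
  have hnad : ∀ a b, ¬ (spider 2 2 2).Adj a b →
      ¬ (Gqp q p).Adj ((e a : S) : ZMod (q * p - 2)) ((e b : S) : ZMod (q * p - 2)) :=
    fun a b h h' => h (e.map_adj_iff.mp h')
  -- branch vertices
  obtain ⟨a1, ha1, hy1⟩ := adj_decomp hq5 hp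
    (hmap none (some (Sum.inl 0)) (by simp [spider]))
  obtain ⟨a2, ha2, hy2⟩ := adj_decomp hq5 hp
    (hmap none (some (Sum.inr (Sum.inl 0))) (by simp [spider]))
  obtain ⟨a3, ha3, hy3⟩ := adj_decomp hq5 hp
    (hmap none (some (Sum.inr (Sum.inr 0))) (by simp [spider]))
  obtain ⟨b1, hb1, hz1⟩ := adj_decomp hq5 hp
    (hmap (some (Sum.inl 0)) (some (Sum.inl 1)) (by simp [spider]))
  obtain ⟨b2, hb2, hz2⟩ := adj_decomp hq5 hp
    (hmap (some (Sum.inr (Sum.inl 0))) (some (Sum.inr (Sum.inl 1))) (by simp [spider]))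
  obtain ⟨b3, hb3, hz3⟩ := adj_decomp hq5 hp
    (hmap (some (Sum.inr (Sum.inr 0))) (some (Sum.inr (Sum.inr 1))) (by simp [spider]))
  have key : ∀ (aj ai bi : ℕ) (x0 yj yi zi : ZMod (q * p - 2)),
      bi ≤ p →
      yj = x0 + ((q * aj : ℕ) : ZMod (q * p - 2)) - 1 →
      yi = x0 + ((q * ai : ℕ) : ZMod (q * p - 2)) - 1 →
      zi = yi + ((q * bi : ℕ) : ZMod (q * p - 2)) - 1 →
      ¬ (Gqp q p).Adj yj zi →
      ¬ (aj ≤ ai + bi ∧ ai + bi ≤ aj + p) := by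
    rintro aj ai bi x0 yj yi zi hbi hyj hyi hzi hnadj ⟨h1, h2⟩
    have hs : ai + bi - aj ≤ p := by omega
    have hadj := adj_of_le hq5 hp hs yj
    have hnat : q * aj + q * (ai + bi - aj) = q * ai + q * bi := by
      have h4 : aj + (ai + bi - aj) = ai + bi := by omega
      calc q * aj + q * (ai + bi - aj) = q * (aj + (ai + bi - aj)) := (Nat.mul_add q _ _).symm
        _ = q * (ai + bi) := by rw [h4]
        _ = q * ai + q * bi := Nat.mul_add q _ _
    have hc : ((q * aj : ℕ) : ZMod (q * p - 2)) + ((q * (ai + bi - aj) : ℕ) : ZMod (q * p - 2))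
        = ((q * ai : ℕ) : ZMod (q * p - 2)) + ((q * bi : ℕ) : ZMod (q * p - 2)) := by
      rw [← Nat.cast_add, ← Nat.cast_add, hnat]
    have heq : yj + ((q * (ai + bi - aj) : ℕ) : ZMod (q * p - 2)) - 1 = zi := by
      linear_combination hc + hyj - hzi - hyi
    rw [heq] at hadj
    exact hnadj hadj
  have H12 := key a2 a1 b1 _ _ _ _ hb1 hy2 hy1 hz1
    (hnad (some (Sum.inr (Sum.inl 0))) (some (Sum.inl 1)) (by simp [spider]))
  have H13 := key a3 a1 b1 _ _ _ _ hb1 hy3 hy1 hz1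
    (hnad (some (Sum.inr (Sum.inr 0))) (some (Sum.inl 1)) (by simp [spider]))
  have H21 := key a1 a2 b2 _ _ _ _ hb2 hy1 hy2 hz2
    (hnad (some (Sum.inl 0)) (some (Sum.inr (Sum.inl 1))) (by simp [spider]))
  have H23 := key a3 a2 b2 _ _ _ _ hb2 hy3 hy2 hz2
    (hnad (some (Sum.inr (Sum.inr 0))) (some (Sum.inr (Sum.inl 1))) (by simp [spider]))
  have H31 := key a1 a3 b3 _ _ _ _ hb3 hy1 hy3 hz3
    (hnad (some (Sum.inl 0)) (some (Sum.inr (Sum.inr 1))) (by simp [spider]))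
  have H32 := key a2 a3 b3 _ _ _ _ hb3 hy2 hy3 hz3
    (hnad (some (Sum.inr (Sum.inl 0))) (some (Sum.inr (Sum.inr 1))) (by simp [spider]))
  omega
end

section
/- Let q ≥ 3 be odd. If p ≥ 2q+1, then G_{q,p} contains an induced path on 3q−3 vertices. -/
open SimpleGraph

lemma int_eq_of_zmod_eq {N : ℕ} {a b : ℤ} (h : (a : ZMod N) = (b : ZMod N))
    (ha0 : 0 ≤ a) (ha1 : a < N) (hb0 : 0 ≤ b) (hb1 : b < N) : a = b := by
  have hN : 0 < N := by
    rcases Nat.eq_zero_or_pos N with h0 | h0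
    · subst h0; simp at ha1; omega
    · exact h0
  rw [ZMod.intCast_eq_intCast_iff] at h
  have h1 : a % (N : ℤ) = b % (N : ℤ) := h
  rwa [Int.emod_eq_of_lt ha0 ha1, Int.emod_eq_of_lt hb0 hb1] at h1

lemma emod_eq_of_add_one {q : ℤ} (hq : 2 ≤ q) {D u : ℤ} (hu : D + 1 = q * u) :
    D % q = q - 1 := by
  have hD : D = (q - 1) + q * (u - 1) := by ring_nf; linarith
  rw [hD, Int.add_mul_emod_self_left]
  exact Int.emod_eq_of_lt (by linarith) (by linarith)

lemma gqp_adj (q p : ℕ) (hq3 : 3 ≤ q) (hp : 2 * q + 1 ≤ p) (x y : ZMod (q * p - 2))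
    (D : ℤ) (hD0 : 0 ≤ D) (hD1 : D < ((q * p - 2 : ℕ) : ℤ))
    (hxy : y - x = (D : ZMod (q * p - 2))) :
    (Gqp q p).Adj x y ↔
      (D = 1 ∨ D = ((q * p - 2 : ℕ) : ℤ) - 1 ∨ D % q = q - 1) := by
  have hqp21 : 21 ≤ q * p := by
    have : 3 * 7 ≤ q * p := Nat.mul_le_mul hq3 (by omega)
    omega
  have hNZ : ((q * p - 2 : ℕ) : ℤ) = (q : ℤ) * p - 2 := by
    push_cast [Nat.cast_sub (by omega : 2 ≤ q * p)]; ring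
  have hN19 : (19 : ℤ) ≤ ((q * p - 2 : ℕ) : ℤ) := by
    rw [hNZ]
    have : (21 : ℤ) ≤ (q : ℤ) * p := by exact_mod_cast hqp21
    linarith
  have hNzmod : (((q * p - 2 : ℕ) : ℤ) : ZMod (q * p - 2)) = 0 := by
    exact_mod_cast ZMod.natCast_self (q * p - 2)
  have hQ3 : (3 : ℤ) ≤ (q : ℤ) := by exact_mod_cast hq3
  have hP : (2 : ℤ) * q + 1 ≤ (p : ℤ) := by exact_mod_cast hp
  rw [Gqp, fromRel_adj]
  constructor
  · rintro ⟨hne, h | h⟩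
    · rcases h with h1 | ⟨k, hk1, hk2, hk⟩
      · left
        refine int_eq_of_zmod_eq ?_ hD0 hD1 (by norm_num) (by linarith)
        rw [← hxy, h1]; push_cast; ring
      · right; right
        have hkp : (k : ℤ) ≤ (p : ℤ) - 1 := by
          have h2 : (k : ℤ) ≤ ((p - 1 : ℕ) : ℤ) := by exact_mod_cast hk2
          have : ((p - 1 : ℕ) : ℤ) = (p : ℤ) - 1 := by
            push_cast [Nat.cast_sub (by omega : 1 ≤ p)]; ring
          omega
        have hk1' : (1 : ℤ) ≤ (k : ℤ) := by exact_mod_cast hk1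
        have hqk : (q : ℤ) * k ≤ (q : ℤ) * (p - 1) :=
          mul_le_mul_of_nonneg_left hkp (by linarith)
        have hb0 : (0 : ℤ) ≤ (q : ℤ) * k - 1 := by nlinarith
        have hb1 : (q : ℤ) * k - 1 < ((q * p - 2 : ℕ) : ℤ) := by rw [hNZ]; nlinarith
        have hDeq : D = (q : ℤ) * k - 1 := by
          refine int_eq_of_zmod_eq ?_ hD0 hD1 hb0 hb1
          rw [← hxy, hk]; push_cast; ring
        exact emod_eq_of_add_one (by linarith) (u := (k : ℤ)) (by rw [hDeq]; ring)
    · rcases h with h1 | ⟨k, hk1, hk2, hk⟩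
      · right; left
        refine int_eq_of_zmod_eq ?_ hD0 hD1 (by linarith) (by linarith)
        rw [← hxy, h1]; push_cast [hNzmod]; ring
      · right; right
        have hkp : (k : ℤ) ≤ (p : ℤ) - 1 := by
          have h2 : (k : ℤ) ≤ ((p - 1 : ℕ) : ℤ) := by exact_mod_cast hk2
          have : ((p - 1 : ℕ) : ℤ) = (p : ℤ) - 1 := by
            push_cast [Nat.cast_sub (by omega : 1 ≤ p)]; ring
          omega
        have hk1' : (1 : ℤ) ≤ (k : ℤ) := by exact_mod_cast hk1
        have hqk : (q : ℤ) * k ≤ (q : ℤ) * (p - 1) :=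
          mul_le_mul_of_nonneg_left hkp (by linarith)
        have hqk1 : (q : ℤ) ≤ (q : ℤ) * k := by nlinarith
        have hb0 : (0 : ℤ) ≤ ((q * p - 2 : ℕ) : ℤ) + 1 - (q : ℤ) * k := by
          rw [hNZ]; nlinarith
        have hb1 : ((q * p - 2 : ℕ) : ℤ) + 1 - (q : ℤ) * k < ((q * p - 2 : ℕ) : ℤ) := by
          linarith
        have hDeq : D = ((q * p - 2 : ℕ) : ℤ) + 1 - (q : ℤ) * k := by
          refine int_eq_of_zmod_eq ?_ hD0 hD1 hb0 hb1
          rw [← hxy, hk]; push_cast [hNzmod]; ring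
        refine emod_eq_of_add_one (by linarith) (u := (p : ℤ) - k) ?_
        rw [hDeq, hNZ]; ring
  · intro h
    have hDne : D ≠ 0 := by
      rcases h with h | h | h
      · omega
      · omega
      · intro h0; rw [h0] at h; simp at h; omega
    have hne : x ≠ y := by
      intro hxyeq
      apply hDne
      refine int_eq_of_zmod_eq ?_ hD0 hD1 (by norm_num) (by linarith)
      rw [← hxy, hxyeq]; push_cast; ring
    refine ⟨hne, ?_⟩
    rcases h with h | h | h
    · left; left
      rw [h] at hxy; push_cast at hxy
      linear_combination hxy
    · right; left
      rw [h] at hxy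
      have hxy' : y - x = (((q * p - 2 : ℕ) : ℤ) : ZMod (q * p - 2)) - 1 := by
        rw [hxy]; push_cast; ring
      rw [hNzmod] at hxy'
      linear_combination -hxy'
    · left; right
      have hdvd : (q : ℤ) ∣ D + 1 := by
        have h2 := Int.emod_add_mul_ediv D (q : ℤ)
        exact ⟨D / q + 1, by linarith⟩
      obtain ⟨k0, hk0⟩ := hdvd
      have hk0pos : 0 < k0 := by
        by_contra hc; push_neg at hc
        have h2 : (q : ℤ) * k0 ≤ 0 := mul_nonpos_of_nonneg_of_nonpos (by linarith) hc
        linarith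
      have hk0lt : k0 < (p : ℤ) := by
        have h1 : (q : ℤ) * k0 < (q : ℤ) * p := by
          rw [← hk0]
          rw [hNZ] at hD1; linarith
        exact lt_of_mul_lt_mul_left h1 (by linarith)
      have htn : (k0.toNat : ℤ) = k0 := Int.toNat_of_nonneg (le_of_lt hk0pos)
      refine ⟨k0.toNat, by omega, by omega, ?_⟩
      have hcast : ((q * k0.toNat : ℕ) : ZMod (q * p - 2)) = ((D : ZMod (q * p - 2))) + 1 := by
        have h1 : ((q * k0.toNat : ℕ) : ℤ) = D + 1 := by push_cast [htn]; linarith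
        calc ((q * k0.toNat : ℕ) : ZMod (q * p - 2))
            = (((q * k0.toNat : ℕ) : ℤ) : ZMod (q * p - 2)) := by push_cast; ring
          _ = ((D + 1 : ℤ) : ZMod (q * p - 2)) := by rw [h1]
          _ = (D : ZMod (q * p - 2)) + 1 := by push_cast; ring
      rw [hcast, ← hxy]; ring

lemma emod_ne_of_add {q : ℤ} {D t u : ℤ} (ht1 : 2 ≤ t) (ht2 : t ≤ q)
    (hu : D + t = q * u) : D % q ≠ q - 1 := by
  intro h
  have hq : 2 ≤ q := by linarith
  have h1 : q ∣ D + 1 := by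
    have := Int.emod_add_mul_ediv D q
    exact ⟨D / q + 1, by linarith⟩
  have h2 : q ∣ t - 1 := by
    have h3 : q ∣ D + t := ⟨u, hu⟩
    have := dvd_sub h3 h1
    simpa using this
  have := Int.le_of_dvd (by linarith) h2
  linarith

/-- The vertex sequence of the induced path, as integers. -/
def gfun (q p : ℕ) : ℕ → ℤ := fun i =>
  (i / 3 : ℕ) * (((q : ℤ) * p - 2) - q - 1) + (i % 3 : ℕ) * ((q : ℤ) * ((p - 1) / 2 : ℕ) - 1)

set_option maxHeartbeats 1000000 in
lemma gfun_pair (q p : ℕ) (hq3 : 3 ≤ q) (hp : 2 * q + 1 ≤ p) {i j : ℕ}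
    (hij : i < j) (hjn : j < 3 * q - 3) :
    ∃ D k : ℤ, gfun q p j - gfun q p i = D + k * ((q : ℤ) * p - 2) ∧
      0 < D ∧ D < (q : ℤ) * p - 2 ∧
      ((j = i + 1) ↔ (D = 1 ∨ D = ((q : ℤ) * p - 2) - 1 ∨ D % (q : ℤ) = (q : ℤ) - 1)) := by
  obtain ⟨m, hm⟩ : ∃ m, m = (p - 1) / 2 := ⟨_, rfl⟩
  obtain ⟨e, he⟩ : ∃ e, e = p - 2 * m := ⟨_, rfl⟩
  obtain ⟨ti, ri, hi, hri⟩ : ∃ t r, i = 3 * t + r ∧ r < 3 := ⟨i / 3, i % 3, by omega, by omega⟩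
  obtain ⟨tj, rj, hj', hrj⟩ : ∃ t r, j = 3 * t + r ∧ r < 3 := ⟨j / 3, j % 3, by omega, by omega⟩
  obtain ⟨s, hs⟩ : ∃ s, tj = ti + s := ⟨tj - ti, by omega⟩
  have hgd : gfun q p j - gfun q p i =
      (s : ℤ) * ((q : ℤ) * p - 2 - q - 1) + ((rj : ℤ) - (ri : ℤ)) * ((q : ℤ) * m - 1) := by
    simp only [gfun]
    rw [← hm]
    have h1 : j / 3 = ti + s := by omega
    have h2 : j % 3 = rj := by omega
    have h3 : i / 3 = ti := by omega
    have h4 : i % 3 = ri := by omega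
    rw [h1, h2, h3, h4]
    push_cast; ring
  have hQ3 : (3 : ℤ) ≤ (q : ℤ) := by exact_mod_cast hq3
  have hP : 2 * (q : ℤ) + 1 ≤ (p : ℤ) := by exact_mod_cast hp
  have hMq : (q : ℤ) ≤ (m : ℤ) := by omega
  have hE1 : (1 : ℤ) ≤ (e : ℤ) := by omega
  have hE2 : (e : ℤ) ≤ 2 := by omega
  have hPE : (p : ℤ) = 2 * (m : ℤ) + (e : ℤ) := by omega
  have hSle : (s : ℤ) ≤ (q : ℤ) - 2 := by omega
  have hS0 : (0 : ℤ) ≤ (s : ℤ) := by positivity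
  have hq0 : (0 : ℤ) ≤ (q : ℤ) := by linarith
  have ha5 : (9 : ℤ) ≤ (q : ℤ) * q := by
    have := mul_le_mul hQ3 hQ3 (by norm_num) hq0; linarith
  have ha2 : (q : ℤ) * q ≤ (q : ℤ) * m := mul_le_mul_of_nonneg_left hMq hq0
  have ha1 : 2 * ((q : ℤ) * q) + q ≤ (q : ℤ) * p := by
    have := mul_le_mul_of_nonneg_left hP hq0; linarith
  have ha3l : (q : ℤ) ≤ (q : ℤ) * e := by
    have := mul_le_mul_of_nonneg_left hE1 hq0; linarith
  have ha3u : (q : ℤ) * e ≤ 2 * q := by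
    have := mul_le_mul_of_nonneg_left hE2 hq0; linarith
  have hqpe : (q : ℤ) * p = 2 * ((q : ℤ) * m) + (q : ℤ) * e := by
    linear_combination (q : ℤ) * hPE
  have ha4 : (s : ℤ) * q ≤ (q : ℤ) * q - 2 * q := by
    have := mul_le_mul_of_nonneg_right hSle hq0; linarith
  have hsq0 : (0 : ℤ) ≤ (s : ℤ) * q := mul_nonneg hS0 hq0
  have hrho : (rj : ℤ) - (ri : ℤ) = -2 ∨ (rj : ℤ) - (ri : ℤ) = -1 ∨
      (rj : ℤ) - (ri : ℤ) = 0 ∨ (rj : ℤ) - (ri : ℤ) = 1 ∨ (rj : ℤ) - (ri : ℤ) = 2 := by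
    omega
  rcases hrho with heq | heq | heq | heq | heq
  · -- ρ = -2 : ri = 2, rj = 0, s ≥ 1
    have hs1 : 1 ≤ s := by omega
    rcases Nat.lt_or_ge s 2 with hs2 | hs2
    · -- s = 1 : consecutive
      have hs1' : s = 1 := by omega
      have hecase : e = 1 ∨ e = 2 := by omega
      rcases hecase with he1 | he2
      · have hE : (e : ℤ) = 1 := by omega
        refine ⟨(q : ℤ) * p - 3, -1, ?_, by linarith, by linarith, ?_⟩
        · rw [hgd, heq]; push_cast [hs1']
          linear_combination (q : ℤ) * hPE + (q : ℤ) * hE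
        · exact iff_of_true (by omega) (Or.inr (Or.inl (by ring)))
      · have hE : (e : ℤ) = 2 := by omega
        refine ⟨(q : ℤ) - 1, 0, ?_, by linarith, by linarith, ?_⟩
        · rw [hgd, heq]; push_cast [hs1']
          linear_combination (q : ℤ) * hPE + (q : ℤ) * hE
        · refine iff_of_true (by omega) (Or.inr (Or.inr ?_))
          exact emod_eq_of_add_one (by linarith) (u := 1) (by ring)
    · -- s ≥ 2
      have hs2' : (2 : ℤ) ≤ (s : ℤ) := by omega
      have h2q : 2 * (q : ℤ) ≤ (s : ℤ) * q := by
        have := mul_le_mul_of_nonneg_right hs2' hq0; linarith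
      have hb1 : 1 < (q : ℤ) * p - 2 + q * e - (s : ℤ) * ((q : ℤ) + 1) := by linarith
      have hb2 : (q : ℤ) * p - 2 + q * e - (s : ℤ) * ((q : ℤ) + 1) < (q : ℤ) * p - 3 := by
        linarith
      refine ⟨(q : ℤ) * p - 2 + q * e - (s : ℤ) * ((q : ℤ) + 1), (s : ℤ) - 2,
        ?_, by linarith, by linarith, ?_⟩
      · rw [hgd, heq]; linear_combination (q : ℤ) * hPE
      · refine iff_of_false (by omega) ?_
        rintro (h | h | h)
        · linarith
        · linarith
        · exact emod_ne_of_add (t := (s : ℤ) + 2) (u := (p : ℤ) + e - s)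
            (by linarith) (by linarith) (by ring) h
  · -- ρ = -1 : s ≥ 1
    have hs1 : 1 ≤ s := by omega
    have hs1' : (1 : ℤ) ≤ (s : ℤ) := by omega
    have hsq : (q : ℤ) ≤ (s : ℤ) * q := by
      have := mul_le_mul_of_nonneg_right hs1' hq0; linarith
    have hb1 : 1 < (q : ℤ) * p - 1 - q * m - (s : ℤ) * ((q : ℤ) + 1) := by linarith
    have hb2 : (q : ℤ) * p - 1 - q * m - (s : ℤ) * ((q : ℤ) + 1) < (q : ℤ) * p - 3 := by
      linarith
    refine ⟨(q : ℤ) * p - 1 - q * m - (s : ℤ) * ((q : ℤ) + 1), (s : ℤ) - 1,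
      ?_, by linarith, by linarith, ?_⟩
    · rw [hgd, heq]; ring
    · refine iff_of_false (by omega) ?_
      rintro (h | h | h)
      · linarith
      · linarith
      · exact emod_ne_of_add (t := (s : ℤ) + 1) (u := (p : ℤ) - m - s)
          (by linarith) (by linarith) (by ring) h
  · -- ρ = 0 : s ≥ 1
    have hs1 : 1 ≤ s := by omega
    have hs1' : (1 : ℤ) ≤ (s : ℤ) := by omega
    have hsq : (q : ℤ) ≤ (s : ℤ) * q := by
      have := mul_le_mul_of_nonneg_right hs1' hq0; linarith
    have hb1 : 1 < (q : ℤ) * p - 2 - (s : ℤ) * ((q : ℤ) + 1) := by linarith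
    have hb2 : (q : ℤ) * p - 2 - (s : ℤ) * ((q : ℤ) + 1) < (q : ℤ) * p - 3 := by linarith
    refine ⟨(q : ℤ) * p - 2 - (s : ℤ) * ((q : ℤ) + 1), (s : ℤ) - 1,
      ?_, by linarith, by linarith, ?_⟩
    · rw [hgd, heq]; ring
    · refine iff_of_false (by omega) ?_
      rintro (h | h | h)
      · linarith
      · linarith
      · exact emod_ne_of_add (t := (s : ℤ) + 2) (u := (p : ℤ) - s)
          (by linarith) (by linarith) (by ring) h
  · -- ρ = 1
    rcases Nat.eq_zero_or_pos s with hs0 | hs1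
    · -- consecutive
      have hb1 : 1 < (q : ℤ) * m - 1 := by linarith
      have hb2 : (q : ℤ) * m - 1 < (q : ℤ) * p - 3 := by linarith
      refine ⟨(q : ℤ) * m - 1, 0, ?_, by linarith, by linarith, ?_⟩
      · rw [hgd, heq]; push_cast [hs0]; ring
      · refine iff_of_true (by omega) (Or.inr (Or.inr ?_))
        exact emod_eq_of_add_one (by linarith) (u := (m : ℤ)) (by ring)
    · have hs1' : (1 : ℤ) ≤ (s : ℤ) := by omega
      have hsq : (q : ℤ) ≤ (s : ℤ) * q := by
        have := mul_le_mul_of_nonneg_right hs1' hq0; linarith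
      have hb1 : 1 < (q : ℤ) * m - 1 - (s : ℤ) * ((q : ℤ) + 1) := by linarith
      have hb2 : (q : ℤ) * m - 1 - (s : ℤ) * ((q : ℤ) + 1) < (q : ℤ) * p - 3 := by linarith
      refine ⟨(q : ℤ) * m - 1 - (s : ℤ) * ((q : ℤ) + 1), (s : ℤ),
        ?_, by linarith, by linarith, ?_⟩
      · rw [hgd, heq]; ring
      · refine iff_of_false (by omega) ?_
        rintro (h | h | h)
        · linarith
        · linarith
        · exact emod_ne_of_add (t := (s : ℤ) + 1) (u := (m : ℤ) - s)
            (by linarith) (by linarith) (by ring) h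
  · -- ρ = 2 : s ≥ 0
    have hb1 : 1 < (q : ℤ) * p - 2 - q * e - (s : ℤ) * ((q : ℤ) + 1) := by linarith
    have hb2 : (q : ℤ) * p - 2 - q * e - (s : ℤ) * ((q : ℤ) + 1) < (q : ℤ) * p - 3 := by
      linarith
    refine ⟨(q : ℤ) * p - 2 - q * e - (s : ℤ) * ((q : ℤ) + 1), (s : ℤ),
      ?_, by linarith, by linarith, ?_⟩
    · rw [hgd, heq]; linear_combination (-(q : ℤ)) * hPE
    · refine iff_of_false (by omega) ?_
      rintro (h | h | h)
      · linarith
      · linarith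
      · exact emod_ne_of_add (t := (s : ℤ) + 2) (u := (p : ℤ) - e - s)
          (by linarith) (by linarith) (by ring) h

/-- For odd `q ≥ 3` and `p ≥ 2q + 1`, the graph `G_{q,p}` contains an induced path on
`3q - 3` vertices. -/
theorem stmt18 (q p : ℕ) (hq : Odd q) (hq3 : 3 ≤ q) (hp : 2 * q + 1 ≤ p) :
    ∃ s : Set (ZMod (q * p - 2)),
      Nonempty (pathGraph (3 * q - 3) ≃g (Gqp q p).induce s) := by
  have hqp21 : 21 ≤ q * p := by
    have : 3 * 7 ≤ q * p := Nat.mul_le_mul hq3 (by omega)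
    omega
  have hNZ : ((q * p - 2 : ℕ) : ℤ) = (q : ℤ) * p - 2 := by
    push_cast [Nat.cast_sub (by omega : 2 ≤ q * p)]; ring
  have hN19 : (19 : ℤ) ≤ ((q * p - 2 : ℕ) : ℤ) := by
    rw [hNZ]
    have : (21 : ℤ) ≤ (q : ℤ) * p := by exact_mod_cast hqp21
    linarith
  have hNzmod : ((q : ZMod (q * p - 2)) * p - 2) = 0 := by
    have h0 : (((q * p - 2 : ℕ) : ℕ) : ZMod (q * p - 2)) = 0 := ZMod.natCast_self _
    push_cast [Nat.cast_sub (by omega : 2 ≤ q * p)] at h0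
    exact h0
  set f : Fin (3 * q - 3) → ZMod (q * p - 2) :=
    fun a => ((gfun q p a : ℤ) : ZMod (q * p - 2)) with hf
  have hdiff : ∀ a b : Fin (3 * q - 3), (a : ℕ) < (b : ℕ) →
      ∃ D : ℤ, 0 < D ∧ D < ((q * p - 2 : ℕ) : ℤ) ∧
        f b - f a = (D : ZMod (q * p - 2)) ∧
        (((b : ℕ) = (a : ℕ) + 1) ↔
          (D = 1 ∨ D = ((q * p - 2 : ℕ) : ℤ) - 1 ∨ D % (q : ℤ) = (q : ℤ) - 1)) := by
    intro a b hab
    obtain ⟨D, k, hid, h0, h1, hiff⟩ := gfun_pair q p hq3 hp hab b.isLt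
    refine ⟨D, h0, by rw [hNZ]; exact h1, ?_, by rw [hNZ]; exact hiff⟩
    have h2 : f b - f a = ((gfun q p b - gfun q p a : ℤ) : ZMod (q * p - 2)) := by
      rw [hf]; push_cast; ring
    rw [h2, hid]
    push_cast
    linear_combination ((k : ℤ) : ZMod (q * p - 2)) * hNzmod
  have hone : ∀ a b : Fin (3 * q - 3), (a : ℕ) < (b : ℕ) →
      ((Gqp q p).Adj (f a) (f b) ↔ (b : ℕ) = (a : ℕ) + 1) := by
    intro a b hab
    obtain ⟨D, h0, h1, hfd, hiff⟩ := hdiff a b hab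
    rw [gqp_adj q p hq3 hp (f a) (f b) D (le_of_lt h0) h1 hfd]
    exact hiff.symm
  have hinj : Function.Injective f := by
    intro a b hab
    rcases lt_trichotomy (a : ℕ) (b : ℕ) with h | h | h
    · obtain ⟨D, h0, h1, hfd, -⟩ := hdiff a b h
      rw [hab, sub_self] at hfd
      have : (0 : ℤ) = D := by
        refine int_eq_of_zmod_eq ?_ (by norm_num) (by linarith) (le_of_lt h0) h1
        rw [← hfd]; push_cast; ring
      omega
    · exact Fin.ext h
    · obtain ⟨D, h0, h1, hfd, -⟩ := hdiff b a h
      rw [hab, sub_self] at hfd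
      have : (0 : ℤ) = D := by
        refine int_eq_of_zmod_eq ?_ (by norm_num) (by linarith) (le_of_lt h0) h1
        rw [← hfd]; push_cast; ring
      omega
  have hmain : ∀ a b : Fin (3 * q - 3),
      (Gqp q p).Adj (f a) (f b) ↔ (pathGraph (3 * q - 3)).Adj a b := by
    intro a b
    rw [pathGraph_adj]
    rcases lt_trichotomy (a : ℕ) (b : ℕ) with h | h | h
    · rw [hone a b h]
      omega
    · have hab : a = b := Fin.ext h
      subst hab
      simp only [SimpleGraph.irrefl, false_iff]
      omega
    · rw [adj_comm, hone b a h]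
      omega
  refine ⟨Set.range f, ⟨⟨Equiv.ofInjective f hinj, ?_⟩⟩⟩
  intro a b
  exact hmain a b
end
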